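/- arXiv:2307.11596 — 2 statements merged into one kernel-verified Lean document; each statement's English description precedes it below -/
import Mathlib

section
/- Let n ≥ 5 and let α, β be semigroup endomorphisms of T_n. Then α L~ β, i.e. for every idempotent semigroup endomorphism η of T_n one has α·η = α if and only if β·η = β, holds if and only if α = β, or neither α nor β is an idempotent different from the identity endomorphism ε (i.e. (α·α = α → α = ε) and (β·β = β → β = ε)). -/
/-- `s : Fin n → Fin n` is an odd permutation if it is the underlying function of some
permutation of sign `-1`. -/
def IsOddPerm {n : ℕ} (s : Fin n → Fin n) : Prop :=
  ∃ σ : Equiv.Perm (Fin n), Equiv.Perm.sign σ = -1 ∧ ⇑σ = s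

/-- `s : Fin n → Fin n` is an even permutation if it is the underlying function of some
permutation of sign `1`. -/
def IsEvenPerm {n : ℕ} (s : Fin n → Fin n) : Prop :=
  ∃ σ : Equiv.Perm (Fin n), Equiv.Perm.sign σ = 1 ∧ ⇑σ = s

/-- A pair `(t, e)` of elements of `T_n` is permissible if `t ∘ t ∘ t = t` and
`t ∘ e = e ∘ t = e ∘ e = e`. -/
def Permissible {n : ℕ} (t e : Fin n → Fin n) : Prop :=
  t ∘ t ∘ t = t ∧ t ∘ e = e ∧ e ∘ t = e ∧ e ∘ e = e

open Classical in
/-- For a (permissible) pair `(t, e)`, the map `φ_{t,e} : T_n → T_n` sending `s` to `t` if `s`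
is an odd permutation, to `t ∘ t` if `s` is an even permutation, and to `e` if `s` is not
bijective. -/
noncomputable def phi {n : ℕ} (t e : Fin n → Fin n) : (Fin n → Fin n) → (Fin n → Fin n) :=
  fun s => if IsOddPerm s then t else if IsEvenPerm s then t ∘ t else e

/-- `φ : T_n → T_n` is a semigroup endomorphism of `T_n` if `φ (s ∘ s') = φ s ∘ φ s'`
for all `s, s'`. -/
def IsEndo {n : ℕ} (φ : (Fin n → Fin n) → (Fin n → Fin n)) : Prop :=
  ∀ s s' : Fin n → Fin n, φ (s ∘ s') = φ s ∘ φ s'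

open Equiv Function

variable {n : ℕ}




lemma exists_fresh (s : Finset (Fin n)) (h : s.card < n) : ∃ m, m ∉ s := by
  by_contra hc; push_neg at hc
  have : s = Finset.univ := Finset.eq_univ_iff_forall.mpr hc
  rw [this] at h; simp at h

lemma trichotomy (s : Fin n → Fin n) : IsOddPerm s ∨ IsEvenPerm s ∨ ¬ Injective s := by
  by_cases hs : Injective s
  · have hb : Bijective s := Finite.injective_iff_bijective.mp hs
    set σ := Equiv.ofBijective s hb
    rcases Int.units_eq_one_or (Equiv.Perm.sign σ) with h | h
    · exact Or.inr (Or.inl ⟨σ, h, rfl⟩)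
    · exact Or.inl ⟨σ, h, rfl⟩
  · exact Or.inr (Or.inr hs)

lemma IsOddPerm.injective {s : Fin n → Fin n} (h : IsOddPerm s) : Injective s := by
  obtain ⟨σ, -, rfl⟩ := h; exact σ.injective

lemma IsEvenPerm.injective {s : Fin n → Fin n} (h : IsEvenPerm s) : Injective s := by
  obtain ⟨σ, -, rfl⟩ := h; exact σ.injective

lemma not_odd_and_even {s : Fin n → Fin n} (h1 : IsOddPerm s) (h2 : IsEvenPerm s) : False := by
  obtain ⟨σ, hσ, rfl⟩ := h1
  obtain ⟨τ, hτ, hts⟩ := h2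
  have : τ = σ := Equiv.coe_fn_injective hts
  rw [this, hσ] at hτ
  exact absurd hτ (by decide)

lemma odd_id_false (h : IsOddPerm (id : Fin n → Fin n)) : False :=
  not_odd_and_even h ⟨1, by simp, by simp⟩

lemma even_id : IsEvenPerm (id : Fin n → Fin n) := ⟨1, by simp, by simp⟩

-- bijective idempotent is id
lemma bij_idem_eq_id {f : Fin n → Fin n} (hf : f ∘ f = f) (hb : Injective f) : f = id := by
  funext x
  have := congrFun hf x
  simpa using hb this

lemma comp_noninj_left {f g : Fin n → Fin n} (hg : ¬ Injective g) : ¬ Injective (f ∘ g) :=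
  fun h => hg h.of_comp

-- noninjective: exists collision
lemma exists_collision {f : Fin n → Fin n} (hf : ¬ Injective f) :
    ∃ a b, a ≠ b ∧ f a = f b := by
  simp only [Injective, not_forall] at hf
  obtain ⟨a, b, hab, hne⟩ := hf
  exact ⟨a, b, hne, hab⟩



def eab (a b : Fin n) : Fin n → Fin n := fun i => if i = a then b else i

lemma inj_of_card_image {f : Fin n → Fin n} (h : (Finset.univ.image f).card = n) :
    Injective f := by
  have huniv : Finset.univ.image f = Finset.univ :=
    Finset.eq_univ_of_card _ (by simpa using h)
  have hsurj : Surjective f := fun y => by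
    have hy : y ∈ Finset.univ.image f := by rw [huniv]; exact Finset.mem_univ y
    simpa using hy
  exact Finite.injective_iff_surjective.mpr hsurj

lemma card_image_lt {f : Fin n → Fin n} (hf : ¬ Injective f) :
    (Finset.univ.image f).card < n := by
  rcases lt_or_ge (Finset.univ.image f).card n with h | h
  · exact h
  · have hle : (Finset.univ.image f).card ≤ n := by
      simpa using Finset.card_le_univ (Finset.univ.image f)
    exact absurd (inj_of_card_image (le_antisymm hle h)) hf

lemma exists_not_mem_image {f : Fin n → Fin n} (hf : ¬ Injective f) :
    ∃ c, c ∉ Finset.univ.image f := by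
  by_contra h
  push_neg at h
  have heq : Finset.univ.image f = Finset.univ := Finset.eq_univ_iff_forall.mpr h
  have hlt := card_image_lt hf
  rw [heq] at hlt
  simp at hlt


/-- a noninjective map of rank `n-1` factors as a permutation following `eab a b`. -/
lemma rank_top_factor {f : Fin n → Fin n} (hf : ¬ Injective f)
    (hcard : (Finset.univ.image f).card = n - 1) :
    ∃ (π : Equiv.Perm (Fin n)) (a b : Fin n), a ≠ b ∧ f = ⇑π ∘ eab a b := by
  obtain ⟨a, b, hab, hfab⟩ := exists_collision hf
  obtain ⟨c, hc⟩ := exists_not_mem_image hf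
  -- f is injective away from a
  have himg : Finset.image f (Finset.univ.erase a) = Finset.univ.image f := by
    apply Finset.Subset.antisymm (Finset.image_subset_image (Finset.subset_univ _))
    · intro x hx
      obtain ⟨y, -, rfl⟩ := Finset.mem_image.mp hx
      rcases eq_or_ne y a with rfl | hy
      · exact Finset.mem_image.mpr ⟨b, Finset.mem_erase.mpr ⟨Ne.symm hab, Finset.mem_univ _⟩, hfab.symm⟩
      · exact Finset.mem_image.mpr ⟨y, Finset.mem_erase.mpr ⟨hy, Finset.mem_univ _⟩, rfl⟩
  have hcard' : (Finset.image f (Finset.univ.erase a)).card = (Finset.univ.erase a).card := by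
    rw [himg, hcard, Finset.card_erase_of_mem (Finset.mem_univ a)]
    simp
  have hinjon : Set.InjOn f ↑(Finset.univ.erase a) := Finset.injOn_of_card_image_eq hcard'
  set g : Fin n → Fin n := fun i => if i = a then c else f i with hg
  have hginj : Injective g := by
    intro i j hij
    simp only [hg] at hij
    by_cases hi : i = a <;> by_cases hj : j = a
    · rw [hi, hj]
    · rw [if_pos hi, if_neg hj] at hij
      exact absurd (Finset.mem_image.mpr ⟨j, Finset.mem_univ _, hij.symm⟩) hc
    · rw [if_neg hi, if_pos hj] at hij
      exact absurd (Finset.mem_image.mpr ⟨i, Finset.mem_univ _, hij⟩) hc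
    · rw [if_neg hi, if_neg hj] at hij
      exact hinjon (by simp [hi]) (by simp [hj]) hij
  refine ⟨Equiv.ofBijective g (Finite.injective_iff_bijective.mp hginj), a, b, hab, ?_⟩
  funext i
  rcases eq_or_ne i a with rfl | hi
  · simp [eab, Equiv.ofBijective_apply, hg, Ne.symm hab, hfab]
  · simp [eab, Equiv.ofBijective_apply, hg, hi]

lemma sing_induction (P : (Fin n → Fin n) → Prop)
    (h1 : ∀ (π : Equiv.Perm (Fin n)) (a b : Fin n), a ≠ b → P (⇑π ∘ eab a b))
    (h2 : ∀ (g : Fin n → Fin n) (a b : Fin n), a ≠ b → ¬ Injective g → P g → P (g ∘ eab a b)) :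
    ∀ f, ¬ Injective f → P f := by
  have aux : ∀ (m : ℕ) (f : Fin n → Fin n), ¬ Injective f →
      n ≤ (Finset.univ.image f).card + m → P f := by
    intro m
    induction m with
    | zero => intro f hf hle; exact absurd hle (by simpa using card_image_lt hf)
    | succ m ih =>
      intro f hf hle
      rcases eq_or_ne (Finset.univ.image f).card (n - 1) with hc | hc
      · obtain ⟨π, a, b, hab, rfl⟩ := rank_top_factor hf hc
        exact h1 π a b hab
      · obtain ⟨a, b, hab, hfab⟩ := exists_collision hf
        obtain ⟨c, hcnm⟩ := exists_not_mem_image hf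
        set g : Fin n → Fin n := fun i => if i = a then c else f i with hgdef
        have hfg : f = g ∘ eab a b := by
          funext i
          rcases eq_or_ne i a with rfl | hi
          · simp [eab, hgdef, Ne.symm hab, hfab]
          · simp [eab, hgdef, hi]
        have himg : Finset.univ.image g = insert c (Finset.univ.image f) := by
          apply Finset.Subset.antisymm
          · intro x hx
            obtain ⟨y, -, rfl⟩ := Finset.mem_image.mp hx
            rcases eq_or_ne y a with rfl | hy
            · simp [hgdef]
            · simp only [hgdef, if_neg hy]
              exact Finset.mem_insert_of_mem (Finset.mem_image.mpr ⟨y, Finset.mem_univ _, rfl⟩)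
          · intro x hx
            rcases Finset.mem_insert.mp hx with rfl | hx
            · exact Finset.mem_image.mpr ⟨a, Finset.mem_univ _, by simp [hgdef]⟩
            · obtain ⟨y, -, rfl⟩ := Finset.mem_image.mp hx
              rcases eq_or_ne y a with rfl | hy
              · exact Finset.mem_image.mpr ⟨b, Finset.mem_univ _, by simp [hgdef, Ne.symm hab, hfab]⟩
              · exact Finset.mem_image.mpr ⟨y, Finset.mem_univ _, by simp [hgdef, hy]⟩
        have hcardg : (Finset.univ.image g).card = (Finset.univ.image f).card + 1 := by
          rw [himg, Finset.card_insert_of_notMem hcnm]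
        have hcf := card_image_lt hf
        have hgnoninj : ¬ Injective g := by
          intro hginj
          have : (Finset.univ.image g).card = n := by
            rw [Finset.card_image_of_injective _ hginj]
            simp
          omega
        have hPg : P g := ih g hgnoninj (by omega)
        rw [hfg]
        exact h2 g a b hab hgnoninj hPg
  intro f hf
  exact aux n f hf (by omega)




lemma swap_disjoint {a b c d : Fin n} (h1 : a ≠ c) (h2 : a ≠ d) (h3 : b ≠ c) (h4 : b ≠ d) :
    Equiv.Perm.Disjoint (Equiv.swap a b) (Equiv.swap c d) := by
  intro x
  by_cases hx : x = a ∨ x = b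
  · right
    rcases hx with rfl | rfl
    · exact Equiv.swap_apply_of_ne_of_ne h1 h2
    · exact Equiv.swap_apply_of_ne_of_ne h3 h4
  · push_neg at hx
    left
    exact Equiv.swap_apply_of_ne_of_ne hx.1 hx.2

lemma conj_swap_mem {N : Subgroup (Equiv.Perm (Fin n))} (hN : N.Normal)
    {σ : Equiv.Perm (Fin n)} (hσ : σ ∈ N) (i j : Fin n) :
    Equiv.swap i j * Equiv.swap (σ i) (σ j) ∈ N := by
  have h1 : Equiv.swap i j * σ * (Equiv.swap i j)⁻¹ ∈ N := hN.conj_mem σ hσ _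
  have h2 : Equiv.swap i j * σ * (Equiv.swap i j)⁻¹ * σ⁻¹ ∈ N := mul_mem h1 (inv_mem hσ)
  have heq : Equiv.swap i j * σ * (Equiv.swap i j)⁻¹ * σ⁻¹
      = Equiv.swap i j * Equiv.swap (σ i) (σ j) := by
    rw [Equiv.swap_apply_apply, Equiv.swap_inv]
    simp [mul_assoc]
  rwa [heq] at h2

lemma threecycle_mem_of_normal (hn : 5 ≤ n) (N : Subgroup (Equiv.Perm (Fin n)))
    (hN : N.Normal) (hbot : N ≠ ⊥) : ∃ f ∈ N, Equiv.Perm.IsThreeCycle f := by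
  obtain ⟨σ, hσN, hσ1⟩ : ∃ x ∈ N, x ≠ (1 : Equiv.Perm (Fin n)) := by
    rcases N.bot_or_exists_ne_one with h | h
    · exact absurd h hbot
    · exact h
  obtain ⟨i, hi⟩ : ∃ i, σ i ≠ i := by
    by_contra hc; push_neg at hc
    exact hσ1 (Equiv.ext fun x => by simp [hc x])
  by_cases hA : σ (σ i) ≠ i
  · refine ⟨_, conj_swap_mem hN hσN i (σ i), ?_⟩
    rw [Equiv.swap_comm i (σ i)]
    exact Equiv.Perm.isThreeCycle_swap_mul_swap_same hi (fun h => hi ((σ.injective h).symm))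
      (fun h => hA h.symm)
  · push_neg at hA
    by_cases hB : ∃ j, j ≠ i ∧ j ≠ σ i ∧ σ j = j
    · obtain ⟨j, hji, hjsi, hjfix⟩ := hB
      have hmem := conj_swap_mem hN hσN i j
      rw [hjfix] at hmem
      refine ⟨_, hmem, ?_⟩
      rw [Equiv.swap_comm i j, Equiv.swap_comm (σ i) j]
      exact Equiv.Perm.isThreeCycle_swap_mul_swap_same hji hjsi (Ne.symm hi)
    · push_neg at hB
      obtain ⟨j, hj⟩ := exists_fresh {i, σ i} (lt_of_le_of_lt
        ((Finset.card_insert_le _ _).trans (by simp)) (show 2 < n by omega))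
      simp only [Finset.mem_insert, Finset.mem_singleton, not_or] at hj
      obtain ⟨hji, hjsi⟩ := hj
      have hsj : σ j ≠ j := hB j hji hjsi
      -- p=i q=j r=σi s=σj all distinct
      have hd1 : i ≠ j := Ne.symm hji
      have hd2 : i ≠ σ i := Ne.symm hi
      have hd3 : i ≠ σ j := by
        intro h
        apply hjsi
        exact σ.injective (h.symm.trans hA.symm)
      have hd4 : j ≠ σ i := hjsi
      have hd5 : j ≠ σ j := Ne.symm hsj
      have hd6 : σ i ≠ σ j := fun h => hd1 (σ.injective h)
      obtain ⟨m, hm⟩ := exists_fresh {i, j, σ i, σ j} (lt_of_le_of_lt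
        ((Finset.card_insert_le _ _).trans (Nat.succ_le_succ
          ((Finset.card_insert_le _ _).trans (Nat.succ_le_succ
            ((Finset.card_insert_le _ _).trans (by simp)))))) (show 4 < n by omega))
      simp only [Finset.mem_insert, Finset.mem_singleton, not_or] at hm
      obtain ⟨hmi, hmj, hmsi, hmsj⟩ := hm
      set ρ : Equiv.Perm (Fin n) := Equiv.swap i j * Equiv.swap (σ i) (σ j) with hρ
      have hρN : ρ ∈ N := conj_swap_mem hN hσN i j
      have hρ'N : Equiv.swap (σ i) m * ρ * (Equiv.swap (σ i) m)⁻¹ * ρ⁻¹ ∈ N :=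
        mul_mem (hN.conj_mem ρ hρN _) (inv_mem hρN)
      refine ⟨_, hρ'N, ?_⟩
      have c1 : Commute (Equiv.swap i j) (Equiv.swap (σ i) (σ j)) :=
        (swap_disjoint hd2 hd3 hd4 hd5).commute
      have c2 : Commute (Equiv.swap i j) (Equiv.swap m (σ j)) :=
        (swap_disjoint (Ne.symm hmi) hd3 (Ne.symm hmj) hd5).commute
      have c3 : Commute (Equiv.swap i j) (Equiv.swap (σ i) m) :=
        (swap_disjoint hd2 (Ne.symm hmi) hd4 (Ne.symm hmj)).commute
      have hconj : Equiv.swap (σ i) m * ρ * (Equiv.swap (σ i) m)⁻¹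
          = Equiv.swap i j * Equiv.swap m (σ j) := by
        have : Equiv.swap (σ i) m * ρ * (Equiv.swap (σ i) m)⁻¹
            = (Equiv.swap (σ i) m * Equiv.swap i j * (Equiv.swap (σ i) m)⁻¹)
              * (Equiv.swap (σ i) m * Equiv.swap (σ i) (σ j) * (Equiv.swap (σ i) m)⁻¹) := by
          rw [hρ]; group
        rw [this, ← Equiv.swap_apply_apply, ← Equiv.swap_apply_apply]
        rw [Equiv.swap_apply_of_ne_of_ne hd2 (fun h => hmi h.symm),
            Equiv.swap_apply_of_ne_of_ne hd4 (fun h => hmj h.symm),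
            Equiv.swap_apply_left,
            Equiv.swap_apply_of_ne_of_ne (fun h => hd6 h.symm) (fun h => hmsj h.symm)]
      rw [hconj, hρ]
      have : Equiv.swap i j * Equiv.swap m (σ j)
            * (Equiv.swap i j * Equiv.swap (σ i) (σ j))⁻¹
          = Equiv.swap m (σ j) * Equiv.swap (σ i) (σ j) := by
        rw [mul_inv_rev, Equiv.swap_inv, Equiv.swap_inv]
        calc Equiv.swap i j * Equiv.swap m (σ j) * (Equiv.swap (σ i) (σ j) * Equiv.swap i j)
            = Equiv.swap i j * Equiv.swap m (σ j) * (Equiv.swap i j * Equiv.swap (σ i) (σ j)) := by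
              rw [c1.eq]
          _ = Equiv.swap i j * (Equiv.swap m (σ j) * Equiv.swap i j) * Equiv.swap (σ i) (σ j) := by
              group
          _ = Equiv.swap i j * (Equiv.swap i j * Equiv.swap m (σ j)) * Equiv.swap (σ i) (σ j) := by
              rw [c2.eq]
          _ = (Equiv.swap i j * Equiv.swap i j) * (Equiv.swap m (σ j) * Equiv.swap (σ i) (σ j)) := by
              group
          _ = Equiv.swap m (σ j) * Equiv.swap (σ i) (σ j) := by
              rw [Equiv.swap_mul_self, one_mul]
      rw [this]
      rw [Equiv.swap_comm m (σ j), Equiv.swap_comm (σ i) (σ j)]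
      exact Equiv.Perm.isThreeCycle_swap_mul_swap_same (fun h => hmsj h.symm) (Ne.symm hd6)
        (fun h => hmsi h)

lemma alternating_le_of_normal (hn : 5 ≤ n) (N : Subgroup (Equiv.Perm (Fin n)))
    (hN : N.Normal) (hbot : N ≠ ⊥) : alternatingGroup (Fin n) ≤ N := by
  obtain ⟨f, hfN, hf3⟩ := threecycle_mem_of_normal hn N hN hbot
  have h5 : 5 ≤ Fintype.card (Fin n) := by simpa using hn
  haveI : (N.subgroupOf (alternatingGroup (Fin n))).Normal := hN.subgroupOf _
  have hsub : ({(⟨f, hf3.mem_alternatingGroup⟩ : alternatingGroup (Fin n))} : Set _)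
      ⊆ ↑(N.subgroupOf (alternatingGroup (Fin n))) := by
    intro x hx
    rcases hx with rfl
    simpa [Subgroup.mem_subgroupOf] using hfN
  have htop : N.subgroupOf (alternatingGroup (Fin n)) = ⊤ := by
    rw [eq_top_iff, ← hf3.alternating_normalClosure (by simpa using hn)]
    exact Subgroup.normalClosure_le_normal hsub
  exact Subgroup.subgroupOf_eq_top.mp htop








/-- there is an even permutation taking `a ↦ c` and `b ↦ d`. -/
lemma exists_even_two_points (hn : 5 ≤ n) {a b c d : Fin n} (hab : a ≠ b) (hcd : c ≠ d) :
    ∃ σ : Equiv.Perm (Fin n), Equiv.Perm.sign σ = 1 ∧ σ a = c ∧ σ b = d := by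
  classical
  set π := Equiv.swap a c with hπ
  have hd' : π⁻¹ d ≠ a := by
    intro h
    apply hcd
    have := congrArg π h
    rw [Equiv.Perm.coe_inv, Equiv.apply_symm_apply] at this
    rw [this, hπ, Equiv.swap_apply_left]
  set ρ := Equiv.swap b (π⁻¹ d) with hρ
  set σ0 := π * ρ with hσ0
  have h1 : σ0 a = c := by
    have : ρ a = a := Equiv.swap_apply_of_ne_of_ne hab (Ne.symm hd')
    simp [hσ0, Equiv.Perm.mul_apply, this, hπ, Equiv.swap_apply_left]
  have h2 : σ0 b = d := by
    have : ρ b = π⁻¹ d := Equiv.swap_apply_left _ _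
    simp [hσ0, Equiv.Perm.mul_apply, this, Equiv.Perm.coe_inv, Equiv.apply_symm_apply]
  rcases Int.units_eq_one_or (Equiv.Perm.sign σ0) with hs | hs
  · exact ⟨σ0, hs, h1, h2⟩
  · obtain ⟨p, hp⟩ := exists_fresh {a, b} (lt_of_le_of_lt
      ((Finset.card_insert_le _ _).trans (by simp)) (show 2 < n by omega))
    obtain ⟨q, hq⟩ := exists_fresh {a, b, p} (lt_of_le_of_lt
      ((Finset.card_insert_le _ _).trans (Nat.succ_le_succ
        ((Finset.card_insert_le _ _).trans (by simp)))) (show 3 < n by omega))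
    simp only [Finset.mem_insert, Finset.mem_singleton, not_or] at hp hq
    refine ⟨σ0 * Equiv.swap p q, ?_, ?_, ?_⟩
    · rw [map_mul, hs, Equiv.Perm.sign_swap (fun h => hq.2.2 h.symm)]
      decide
    · rw [Equiv.Perm.mul_apply, Equiv.swap_apply_of_ne_of_ne
        (fun h => hp.1 h.symm) (fun h => hq.1 h.symm), h1]
    · rw [Equiv.Perm.mul_apply, Equiv.swap_apply_of_ne_of_ne
        (fun h => hp.2 h.symm) (fun h => hq.2.1 h.symm), h2]
lemma eab_comp_self {a b : Fin n} (hab : a ≠ b) : eab a b ∘ eab a b = eab a b := by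
  funext i; by_cases h : i = a <;> simp [eab, h, Ne.symm hab]

lemma eab_comp_swap {a b : Fin n} (hab : a ≠ b) : eab a b ∘ ⇑(Equiv.swap a b) = eab a b := by
  funext i
  rcases eq_or_ne i a with rfl | hia
  · simp [eab, Equiv.swap_apply_left, Ne.symm hab]
  · rcases eq_or_ne i b with rfl | hib
    · simp [eab, Equiv.swap_apply_right, Ne.symm hab]
    · simp [eab, Equiv.swap_apply_of_ne_of_ne hia hib, hia]

lemma swap_comp_eab {a b : Fin n} (hab : a ≠ b) :
    ⇑(Equiv.swap a b) ∘ eab a b = eab b a := by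
  funext i
  rcases eq_or_ne i a with rfl | hia
  · simp [eab, Ne.symm hab, hab, Equiv.swap_apply_right]
  · rcases eq_or_ne i b with rfl | hib
    · simp [eab, Ne.symm hab, Equiv.swap_apply_right]
    · simp [eab, hia, hib, Equiv.swap_apply_of_ne_of_ne hia hib]

lemma perm_comp_eab_comp_inv (σ : Equiv.Perm (Fin n)) (a b : Fin n) :
    ⇑σ ∘ eab a b ∘ ⇑σ⁻¹ = eab (σ a) (σ b) := by
  funext x
  rcases eq_or_ne x (σ a) with rfl | hx
  · simp [eab]
  · have : σ⁻¹ x ≠ a := fun h => hx (by simp [← h])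
    simp only [Equiv.Perm.coe_inv] at this; simp [eab, this, hx]

lemma eab_comm {a b c d : Fin n} (h1 : a ≠ c) (h2 : a ≠ d) (h3 : b ≠ c) (h4 : b ≠ d) :
    eab a b ∘ eab c d = eab c d ∘ eab a b := by
  funext i
  rcases eq_or_ne i a with rfl | hia
  · simp [eab, h1, Ne.symm h1, h3]
  · rcases eq_or_ne i c with rfl | hic
    · simp [eab, h1, Ne.symm h1, Ne.symm h2, hia]
    · simp [eab, hia, hic]

theorem lemmaB (hn : 5 ≤ n) {φ : (Fin n → Fin n) → (Fin n → Fin n)} (hφ : IsEndo φ)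
    (hni : ∃ σ τ : Equiv.Perm (Fin n), ⇑σ ≠ ⇑τ ∧ φ ⇑σ = φ ⇑τ) :
    ∃ t e : Fin n → Fin n,
      (∀ s, IsOddPerm s → φ s = t) ∧ (∀ s, IsEvenPerm s → φ s = t ∘ t) ∧
      (∀ s, ¬ Injective s → φ s = e) ∧
      t ∘ t ∘ t = t ∧ t ∘ e = e ∧ e ∘ t = e ∧ e ∘ e = e := by
  classical
  set u : Fin n → Fin n := φ id with hu_def
  have hcoe1 : ⇑(1 : Equiv.Perm (Fin n)) = (id : Fin n → Fin n) := rfl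
  have hu : u ∘ u = u := by
    rw [hu_def, ← hφ]; rfl
  -- the kernel subgroup
  have hmulmem : ∀ {s s' : Equiv.Perm (Fin n)}, φ ⇑s = u → φ ⇑s' = u → φ ⇑(s * s') = u := by
    intro s s' hs hs'
    have : ⇑(s * s') = ⇑s ∘ ⇑s' := rfl
    rw [this, hφ, hs, hs', hu]
  have hinvmem : ∀ {s : Equiv.Perm (Fin n)}, φ ⇑s = u → φ ⇑s⁻¹ = u := by
    intro s hs
    have h1 : ⇑s⁻¹ ∘ ⇑s = id := by funext x; simp
    have h2 : (φ ⇑s⁻¹) ∘ u = u := by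
      conv_lhs => rw [← hs, ← hφ, h1]
    have h3 : φ ⇑s⁻¹ = (φ ⇑s⁻¹) ∘ u := by
      conv_rhs => rw [hu_def, ← hφ]
      simp
    rw [h3, h2]
  set N : Subgroup (Equiv.Perm (Fin n)) :=
    { carrier := {s | φ ⇑s = u}
      one_mem' := by simp [hcoe1, hu_def]
      mul_mem' := fun hs hs' => hmulmem hs hs'
      inv_mem' := fun hs => hinvmem hs } with hN_def
  have hmemN : ∀ s : Equiv.Perm (Fin n), s ∈ N ↔ φ ⇑s = u := fun s => Iff.rfl
  have hNnormal : N.Normal := by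
    constructor
    intro s hs g
    rw [hmemN] at hs ⊢
    have hco : ⇑(g * s * g⁻¹) = ⇑g ∘ ⇑s ∘ ⇑g⁻¹ := rfl
    have hgg : ⇑g ∘ ⇑g⁻¹ = (id : Fin n → Fin n) := by funext x; simp
    rw [hco, hφ, hφ, hs, hu_def, ← hφ, ← hφ, Function.id_comp, hgg]
  have hNbot : N ≠ ⊥ := by
    obtain ⟨σ, τ, hne, heq⟩ := hni
    intro hbot
    have hmem : σ * τ⁻¹ ∈ N := by
      rw [hmemN]
      have hco : ⇑(σ * τ⁻¹) = ⇑σ ∘ ⇑τ⁻¹ := rfl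
      rw [hco, hφ, heq, ← hφ]
      have : ⇑τ ∘ ⇑τ⁻¹ = id := by funext x; simp
      rw [this]
    rw [hbot, Subgroup.mem_bot] at hmem
    apply hne
    have : σ = τ := by
      have := congrArg (· * τ) hmem
      simpa [mul_assoc] using this
    rw [this]
  have hAle : alternatingGroup (Fin n) ≤ N := alternating_le_of_normal hn N hNnormal hNbot
  have heven : ∀ σ : Equiv.Perm (Fin n), Equiv.Perm.sign σ = 1 → φ ⇑σ = u := by
    intro σ hσ
    exact (hmemN σ).mp (hAle (Equiv.Perm.mem_alternatingGroup.mpr hσ))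
  -- fixed odd permutation
  have h01 : (⟨0, by omega⟩ : Fin n) ≠ ⟨1, by omega⟩ := by simp [Fin.ext_iff]
  set a : Fin n := ⟨0, by omega⟩
  set b : Fin n := ⟨1, by omega⟩
  set τ₀ : Equiv.Perm (Fin n) := Equiv.swap a b with hτ₀
  have hτ₀sign : Equiv.Perm.sign τ₀ = -1 := Equiv.Perm.sign_swap h01
  set t : Fin n → Fin n := φ ⇑τ₀ with ht_def
  have hut : u ∘ t = t := by rw [hu_def, ht_def, ← hφ]; simp
  have htu : t ∘ u = t := by rw [hu_def, ht_def, ← hφ]; simp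
  have hodd : ∀ σ : Equiv.Perm (Fin n), Equiv.Perm.sign σ = -1 → φ ⇑σ = t := by
    intro σ hσ
    have hdecomp : ⇑σ = ⇑(σ * τ₀⁻¹) ∘ ⇑τ₀ := by
      funext x; simp [Equiv.Perm.mul_apply]
    have hsign : Equiv.Perm.sign (σ * τ₀⁻¹) = 1 := by
      rw [map_mul, hσ, map_inv, hτ₀sign]; decide
    rw [hdecomp, hφ, heven _ hsign, ← ht_def, hut]
  have htt : t ∘ t = u := by
    rw [ht_def, hu_def, ← hφ]
    have : ⇑τ₀ ∘ ⇑τ₀ = id := by funext x; simp [hτ₀]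
    rw [this]
  -- the singular value
  set e : Fin n → Fin n := φ (eab a b) with he_def
  have hue : u ∘ e = e := by rw [hu_def, he_def, ← hφ]; simp
  have heu : e ∘ u = e := by rw [hu_def, he_def, ← hφ]; simp
  have heab : ∀ c d : Fin n, c ≠ d → φ (eab c d) = e := by
    intro c d hcd
    obtain ⟨σ, hσsign, hσa, hσb⟩ := exists_even_two_points hn h01 hcd
    have hconj : eab c d = ⇑σ ∘ eab a b ∘ ⇑σ⁻¹ := by
      rw [perm_comp_eab_comp_inv, hσa, hσb]
    have hσinv : Equiv.Perm.sign σ⁻¹ = 1 := by rw [map_inv, hσsign]; rfl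
    rw [hconj]
    have hassoc : ⇑σ ∘ eab a b ∘ ⇑σ⁻¹ = (⇑σ ∘ eab a b) ∘ ⇑σ⁻¹ := rfl
    rw [hassoc, hφ, hφ, heven _ hσsign, heven _ hσinv, ← he_def]
    rw [hue, heu]
  have hte : t ∘ e = e := by
    have h1 : ⇑τ₀ ∘ eab a b = eab b a := by rw [hτ₀]; exact swap_comp_eab h01
    have h2 := hφ ⇑τ₀ (eab a b)
    rw [h1, heab b a (Ne.symm h01)] at h2
    exact h2.symm
  have het : e ∘ t = e := by
    have h1 : eab a b ∘ ⇑τ₀ = eab a b := by rw [hτ₀]; exact eab_comp_swap h01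
    have h2 := hφ (eab a b) ⇑τ₀
    rw [h1] at h2
    exact h2.symm
  have hee : e ∘ e = e := by
    have h2 := hφ (eab a b) (eab a b)
    rw [eab_comp_self h01] at h2
    exact h2.symm
  have hsing : ∀ s, ¬ Injective s → φ s = e := by
    apply sing_induction (fun f => φ f = e)
    · intro π c d hcd
      rw [hφ, heab c d hcd]
      rcases Int.units_eq_one_or (Equiv.Perm.sign π) with hs | hs
      · rw [heven _ hs, hue]
      · rw [hodd _ hs, hte]
    · intro g c d hcd hg hPg
      rw [hφ, hPg, heab c d hcd, hee]
  refine ⟨t, e, ?_, ?_, hsing, ?_, hte, het, hee⟩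
  · rintro s ⟨σ, hσ, rfl⟩
    exact hodd σ hσ
  · rintro s ⟨σ, hσ, rfl⟩
    rw [htt]
    exact heven σ hσ
  · rw [htt, htu]
lemma eta_fixes_eab (hn : 5 ≤ n) {η : (Fin n → Fin n) → (Fin n → Fin n)} (hη : IsEndo η)
    (hid : ∀ x, η (η x) = η x)
    (hperm : ∀ σ : Equiv.Perm (Fin n), η ⇑σ = ⇑σ) {a b : Fin n} (hab : a ≠ b) :
    η (eab a b) = eab a b := by
  classical
  set x : Fin n → Fin n := η (eab a b) with hx_def
  have hx2 : x ∘ x = x := by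
    have h := hη (eab a b) (eab a b)
    rw [eab_comp_self hab] at h
    exact h.symm
  have hxx : ∀ i, x (x i) = x i := fun i => congrFun hx2 i
  have hxab : x a = x b := by
    have h := hη (eab a b) ⇑(Equiv.swap a b)
    rw [eab_comp_swap hab, hperm] at h
    have := congrFun h b
    simp only [Function.comp_apply, Equiv.swap_apply_right] at this
    exact this.symm
  have hcomm : ∀ σ : Equiv.Perm (Fin n), σ a = a → σ b = b → ∀ i, x (σ i) = σ (x i) := by
    intro σ ha hb i
    have hconj : ⇑σ ∘ eab a b ∘ ⇑σ⁻¹ = eab a b := by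
      rw [perm_comp_eab_comp_inv, ha, hb]
    have h3 : x = ⇑σ ∘ x ∘ ⇑σ⁻¹ := by
      conv_lhs => rw [hx_def, ← hconj]
      rw [hη ⇑σ (eab a b ∘ ⇑σ⁻¹), hη (eab a b) ⇑σ⁻¹, hperm σ, hperm σ⁻¹, ← hx_def]
    have h4 := congrFun h3 (σ i)
    simp only [Function.comp_apply, Equiv.Perm.coe_inv, Equiv.symm_apply_apply] at h4
    exact h4
  -- step 1 : x a ∈ {a, b}
  have hstep1 : x a = a ∨ x a = b := by
    by_contra hc
    push_neg at hc
    obtain ⟨hca, hcb⟩ := hc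
    obtain ⟨d, hd⟩ := exists_fresh {a, b, x a} (lt_of_le_of_lt
      ((Finset.card_insert_le _ _).trans (Nat.succ_le_succ
        ((Finset.card_insert_le _ _).trans (by simp)))) (show 3 < n by omega))
    simp only [Finset.mem_insert, Finset.mem_singleton, not_or] at hd
    have hσa : Equiv.swap (x a) d a = a :=
      Equiv.swap_apply_of_ne_of_ne (Ne.symm hca) (fun h => hd.1 h.symm)
    have hσb : Equiv.swap (x a) d b = b :=
      Equiv.swap_apply_of_ne_of_ne (Ne.symm hcb) (fun h => hd.2.1 h.symm)
    have := hcomm (Equiv.swap (x a) d) hσa hσb a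
    rw [hσa, Equiv.swap_apply_left] at this
    exact hd.2.2 this.symm
  -- step 2 : for i ∉ {a,b}, x i ∈ {i, a, b}
  have hstep2 : ∀ i, i ≠ a → i ≠ b → x i = i ∨ x i = a ∨ x i = b := by
    intro i hia hib
    by_contra hc
    push_neg at hc
    obtain ⟨hci, hca, hcb⟩ := hc
    obtain ⟨d, hd⟩ := exists_fresh {a, b, i, x i} (lt_of_le_of_lt
      ((Finset.card_insert_le _ _).trans (Nat.succ_le_succ
        ((Finset.card_insert_le _ _).trans (Nat.succ_le_succ
          ((Finset.card_insert_le _ _).trans (by simp)))))) (show 4 < n by omega))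
    simp only [Finset.mem_insert, Finset.mem_singleton, not_or] at hd
    have hσa : Equiv.swap (x i) d a = a :=
      Equiv.swap_apply_of_ne_of_ne (Ne.symm hca) (fun h => hd.1 h.symm)
    have hσb : Equiv.swap (x i) d b = b :=
      Equiv.swap_apply_of_ne_of_ne (Ne.symm hcb) (fun h => hd.2.1 h.symm)
    have hσi : Equiv.swap (x i) d i = i :=
      Equiv.swap_apply_of_ne_of_ne (Ne.symm hci) (fun h => hd.2.2.1 h.symm)
    have := hcomm (Equiv.swap (x i) d) hσa hσb i
    rw [hσi, Equiv.swap_apply_left] at this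
    exact hd.2.2.2 this.symm
  -- main case split
  by_cases hcase : ∃ i, i ≠ a ∧ i ≠ b ∧ (x i = a ∨ x i = b)
  · -- x is constant, contradiction
    exfalso
    obtain ⟨i₀, hi₀a, hi₀b, hxi₀⟩ := hcase
    have hconst : ∀ j, j ≠ a → j ≠ b → x j = x i₀ := by
      intro j hja hjb
      rcases eq_or_ne j i₀ with rfl | hji₀
      · rfl
      · have hσa : Equiv.swap i₀ j a = a :=
          Equiv.swap_apply_of_ne_of_ne (Ne.symm hi₀a) (Ne.symm hja)
        have hσb : Equiv.swap i₀ j b = b :=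
          Equiv.swap_apply_of_ne_of_ne (Ne.symm hi₀b) (Ne.symm hjb)
        have h := hcomm (Equiv.swap i₀ j) hσa hσb i₀
        rw [Equiv.swap_apply_left] at h
        rw [h]
        rcases hxi₀ with h' | h' <;> rw [h']
        · exact hσa
        · exact hσb
    have hxa : x a = x i₀ := by
      have h1 : x (x i₀) = x i₀ := hxx i₀
      rcases hxi₀ with h' | h'
      · rw [h'] at h1; rw [h']; exact h1
      · rw [h'] at h1; rw [h', hxab]; exact h1
    have hall : ∀ j, x j = x i₀ := by
      intro j
      rcases eq_or_ne j a with rfl | hja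
      · exact hxa
      rcases eq_or_ne j b with rfl | hjb
      · rw [← hxab]; exact hxa
      · exact hconst j hja hjb
    -- disjoint pair a' b'
    obtain ⟨a', ha'⟩ := exists_fresh {a, b} (lt_of_le_of_lt
      ((Finset.card_insert_le _ _).trans (by simp)) (show 2 < n by omega))
    obtain ⟨b', hb'⟩ := exists_fresh {a, b, a'} (lt_of_le_of_lt
      ((Finset.card_insert_le _ _).trans (Nat.succ_le_succ
        ((Finset.card_insert_le _ _).trans (by simp)))) (show 3 < n by omega))
    simp only [Finset.mem_insert, Finset.mem_singleton, not_or] at ha' hb'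
    set σ : Equiv.Perm (Fin n) := Equiv.swap a a' * Equiv.swap b b' with hσ_def
    have hσa : σ a = a' := by
      rw [hσ_def, Equiv.Perm.mul_apply,
        Equiv.swap_apply_of_ne_of_ne hab (fun h => hb'.1 h.symm), Equiv.swap_apply_left]
    have hσb : σ b = b' := by
      rw [hσ_def, Equiv.Perm.mul_apply, Equiv.swap_apply_left,
        Equiv.swap_apply_of_ne_of_ne (fun h => hb'.1 h) (fun h => hb'.2.2 h)]
    have hx' : η (eab a' b') = ⇑σ ∘ x ∘ ⇑σ⁻¹ := by
      have hconj : eab a' b' = ⇑σ ∘ eab a b ∘ ⇑σ⁻¹ := by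
        rw [perm_comp_eab_comp_inv, hσa, hσb]
      rw [hconj, hη ⇑σ (eab a b ∘ ⇑σ⁻¹), hη (eab a b) ⇑σ⁻¹, hperm σ, hperm σ⁻¹, ← hx_def]
    have hcommute : x ∘ η (eab a' b') = η (eab a' b') ∘ x := by
      have h1 := hη (eab a b) (eab a' b')
      have h2 := hη (eab a' b') (eab a b)
      rw [eab_comm (fun h => ha'.1 h.symm) (fun h => hb'.1 h.symm)
        (fun h => ha'.2 h.symm) (fun h => hb'.2.1 h.symm)] at h1
      exact h1.symm.trans h2
    have heval := congrFun hcommute a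
    rw [hx'] at heval
    simp only [Function.comp_apply] at heval
    -- LHS: x (σ (x (σ⁻¹ a))) ; RHS: σ (x (σ⁻¹ (x a)))
    rw [hall (σ (x (σ⁻¹ a))), hall (σ⁻¹ (x a))] at heval
    -- heval : x i₀ = σ (x i₀)
    rcases hxi₀ with h' | h' <;> rw [h'] at heval
    · rw [hσa] at heval; exact ha'.1 heval.symm
    · rw [hσb] at heval; exact hb'.2.1 heval.symm
  · -- x = eab a b (or the excluded eab b a)
    push_neg at hcase
    have hfix : ∀ i, i ≠ a → i ≠ b → x i = i := by
      intro i hia hib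
      rcases hstep2 i hia hib with h | h | h
      · exact h
      · exact absurd h (hcase i hia hib).1
      · exact absurd h (hcase i hia hib).2
    rcases hstep1 with hxa | hxa
    · -- x = eab b a, contradict idempotency
      exfalso
      have hxval : x = eab b a := by
        funext i
        rcases eq_or_ne i a with rfl | hia
        · rw [hxa, eab]; simp [hab]
        · rcases eq_or_ne i b with rfl | hib
          · rw [← hxab, hxa, eab]; simp
          · rw [hfix i hia hib, eab]; simp [hia, hib]
      have h1 : η (eab b a) = eab b a := by
        rw [← hxval, hx_def]
        exact hid (eab a b)
      have h2 : η (eab b a) = eab a b := by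
        have hcs : ⇑(Equiv.swap a b) ∘ eab a b = eab b a := swap_comp_eab hab
        have h3 := hη ⇑(Equiv.swap a b) (eab a b)
        rw [hcs, hperm, ← hx_def, hxval] at h3
        -- h3 : η (eab b a) = ⇑(swap a b) ∘ eab b a
        rw [h3]
        funext i
        rcases eq_or_ne i a with rfl | hia
        · simp [eab, hab, Ne.symm hab, Equiv.swap_apply_left]
        · rcases eq_or_ne i b with rfl | hib
          · simp [eab, Ne.symm hab, Equiv.swap_apply_left]
          · simp [eab, hia, hib, Equiv.swap_apply_of_ne_of_ne hia hib]
      rw [h1] at h2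
      have := congrFun h2 a
      simp [eab, hab, Ne.symm hab] at this
    · funext i
      rcases eq_or_ne i a with rfl | hia
      · rw [hxa, eab]; simp
      · rcases eq_or_ne i b with rfl | hib
        · rw [← hxab, hxa, eab]; simp [Ne.symm hab]
        · rw [hfix i hia hib, eab]; simp [hia, hib]

theorem lemmaC (hn : 5 ≤ n) {η : (Fin n → Fin n) → (Fin n → Fin n)} (hη : IsEndo η)
    (hid : ∀ x, η (η x) = η x)
    (hinj : ∀ σ τ : Equiv.Perm (Fin n), η ⇑σ = η ⇑τ → σ = τ) :
    η = (id : (Fin n → Fin n) → (Fin n → Fin n)) := by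
  classical
  set u : Fin n → Fin n := η id with hu_def
  have hu : u ∘ u = u := by
    have h := hη id id
    simp only [Function.comp_id] at h
    exact h.symm
  have hleft : ∀ σ : Equiv.Perm (Fin n), u ∘ η ⇑σ = η ⇑σ := by
    intro σ
    have h := hη id ⇑σ
    simp only [Function.id_comp] at h
    exact h.symm
  have hright : ∀ σ : Equiv.Perm (Fin n), η ⇑σ ∘ u = η ⇑σ := by
    intro σ
    have h := hη ⇑σ id
    simp only [Function.comp_id] at h
    exact h.symm
  have hcinv : ∀ σ : Equiv.Perm (Fin n), η ⇑σ ∘ η ⇑σ⁻¹ = u ∧ η ⇑σ⁻¹ ∘ η ⇑σ = u := by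
    intro σ
    constructor
    · have h := hη ⇑σ ⇑σ⁻¹
      have hco : ⇑σ ∘ ⇑σ⁻¹ = (id : Fin n → Fin n) := by funext y; simp
      rw [hco] at h
      exact h.symm
    · have h := hη ⇑σ⁻¹ ⇑σ
      have hco : ⇑σ⁻¹ ∘ ⇑σ = (id : Fin n → Fin n) := by funext y; simp
      rw [hco] at h
      exact h.symm
  -- u is the identity (via a cardinality argument)
  have huid : u = id := by
    set S : Finset (Fin n) := Finset.univ.image u with hS_def
    have hfixS : ∀ y : Fin n, y ∈ S → u y = y := by
      intro y hy
      obtain ⟨z, -, rfl⟩ := Finset.mem_image.mp hy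
      exact congrFun hu z
    have hmemS : ∀ (σ : Equiv.Perm (Fin n)) (y : Fin n), η ⇑σ y ∈ S := by
      intro σ y
      have : u (η ⇑σ y) = η ⇑σ y := congrFun (hleft σ) y
      exact Finset.mem_image.mpr ⟨η ⇑σ y, Finset.mem_univ _, this⟩
    set F : Equiv.Perm (Fin n) → ({y // y ∈ S} ≃ {y // y ∈ S}) := fun σ =>
      { toFun := fun y => ⟨η ⇑σ y.1, hmemS σ y.1⟩
        invFun := fun y => ⟨η ⇑σ⁻¹ y.1, hmemS σ⁻¹ y.1⟩
        left_inv := by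
          intro y
          apply Subtype.ext
          show η ⇑σ⁻¹ (η ⇑σ y.1) = y.1
          have h1 : η ⇑σ⁻¹ (η ⇑σ y.1) = u y.1 := congrFun (hcinv σ).2 y.1
          rw [h1]
          exact hfixS y.1 y.2
        right_inv := by
          intro y
          apply Subtype.ext
          show η ⇑σ (η ⇑σ⁻¹ y.1) = y.1
          have h1 : η ⇑σ (η ⇑σ⁻¹ y.1) = u y.1 := congrFun (hcinv σ).1 y.1
          rw [h1]
          exact hfixS y.1 y.2 } with hF_def
    have hFinj : Injective F := by
      intro σ τ h
      apply hinj
      funext y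
      have h1 : η ⇑σ (u y) = η ⇑τ (u y) := by
        have hy : u y ∈ S := Finset.mem_image.mpr ⟨y, Finset.mem_univ _, rfl⟩
        have := congrArg (fun (f : {y // y ∈ S} ≃ {y // y ∈ S}) => (f ⟨u y, hy⟩).1) h
        simpa [hF_def] using this
      calc η ⇑σ y = η ⇑σ (u y) := (congrFun (hright σ) y).symm
        _ = η ⇑τ (u y) := h1
        _ = η ⇑τ y := congrFun (hright τ) y
    have hcard := Fintype.card_le_of_injective F hFinj
    rw [Fintype.card_perm, Fintype.card_equiv (Equiv.refl _), Fintype.card_coe,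
      Fintype.card_fin] at hcard
    have hScard : S.card = n := by
      by_contra hne
      have h1 : S.card ≤ n := by simpa using Finset.card_le_univ S
      have h2 : S.card ≤ n - 1 := by omega
      have h3 : Nat.factorial S.card ≤ Nat.factorial (n - 1) := Nat.factorial_le h2
      have h4 : Nat.factorial (n - 1) < Nat.factorial n := by
        have he : Nat.factorial n = n * Nat.factorial (n-1) := by
          conv_lhs => rw [show n = (n-1) + 1 by omega]
          rw [Nat.factorial_succ]
          congr 2
          omega
        rw [he]
        have hpos : 0 < Nat.factorial (n-1) := Nat.factorial_pos _
        calc Nat.factorial (n-1) = 1 * Nat.factorial (n-1) := (one_mul _).symm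
          _ < n * Nat.factorial (n-1) := by
              exact (Nat.mul_lt_mul_right hpos).mpr (by omega)
      omega
    have hSuniv : S = Finset.univ := Finset.eq_univ_of_card S (by simp [hScard])
    have hsurj : Surjective u := by
      intro y
      have : y ∈ S := hSuniv ▸ Finset.mem_univ y
      obtain ⟨z, -, hz⟩ := Finset.mem_image.mp this
      exact ⟨z, hz⟩
    funext y
    obtain ⟨z, rfl⟩ := hsurj y
    exact congrFun hu z
  -- η fixes all permutations
  have hfixperm : ∀ τ : Equiv.Perm (Fin n), η ⇑τ = ⇑τ := by
    have hG : ∀ σ : Equiv.Perm (Fin n), ∃ π : Equiv.Perm (Fin n), η ⇑σ = ⇑π := by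
      intro σ
      refine ⟨{ toFun := η ⇑σ, invFun := η ⇑σ⁻¹, left_inv := ?_, right_inv := ?_ }, rfl⟩
      · intro y
        have := congrFun (hcinv σ).2 y
        rw [huid] at this
        exact this
      · intro y
        have := congrFun (hcinv σ).1 y
        rw [huid] at this
        exact this
    choose G hGspec using hG
    have hGinj : Injective G := by
      intro σ τ h
      apply hinj
      rw [hGspec σ, hGspec τ, h]
    have hGsurj : Surjective G := Finite.injective_iff_surjective.mp hGinj
    intro τ
    obtain ⟨σ, hστ⟩ := hGsurj τ
    have h1 : η ⇑σ = ⇑τ := by rw [hGspec σ, hστ]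
    calc η ⇑τ = η (η ⇑σ) := by rw [h1]
      _ = η ⇑σ := hid _
      _ = ⇑τ := h1
  -- η fixes all noninjective maps
  have hfixsing : ∀ f : Fin n → Fin n, ¬ Injective f → η f = f := by
    apply sing_induction (fun f => η f = f)
    · intro π c d hcd
      rw [hη, hfixperm, eta_fixes_eab hn hη hid hfixperm hcd]
    · intro g c d hcd hgni hPg
      rw [hη, hPg, eta_fixes_eab hn hη hid hfixperm hcd]
  funext f
  by_cases hf : Injective f
  · have hb : Bijective f := Finite.injective_iff_bijective.mp hf
    have := hfixperm (Equiv.ofBijective f hb)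
    simpa using this
  · simpa using hfixsing f hf

theorem idem_classification (hn : 5 ≤ n) {η : (Fin n → Fin n) → (Fin n → Fin n)}
    (hη : IsEndo η) (hid : ∀ x, η (η x) = η x) :
    η = id ∨ ∃ t e : Fin n → Fin n,
      (∀ s, IsOddPerm s → η s = t) ∧ (∀ s, IsEvenPerm s → η s = t ∘ t) ∧
      (∀ s, ¬ Injective s → η s = e) ∧
      t ∘ t ∘ t = t ∧ t ∘ e = e ∧ e ∘ t = e ∧ e ∘ e = e := by
  by_cases hcol : ∃ σ τ : Equiv.Perm (Fin n), ⇑σ ≠ ⇑τ ∧ η ⇑σ = η ⇑τ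
  · exact Or.inr (lemmaB hn hη hcol)
  · left
    apply lemmaC hn hη hid
    intro σ τ h
    by_contra hne
    exact hcol ⟨σ, τ, fun hc => hne (Equiv.coe_fn_injective hc), h⟩

lemma four_in_three {X : Type*} {x y z a b c d : X}
    (ha : a = x ∨ a = y ∨ a = z) (hb : b = x ∨ b = y ∨ b = z)
    (hc : c = x ∨ c = y ∨ c = z) (hd : d = x ∨ d = y ∨ d = z) :
    a = b ∨ a = c ∨ a = d ∨ b = c ∨ b = d ∨ c = d := by
  rcases ha with rfl | rfl | rfl <;> rcases hb with h | h | h <;>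
    rcases hc with h' | h' | h' <;> rcases hd with h'' | h'' | h'' <;>
    simp [h, h', h'']

lemma eab_noninj {a b : Fin n} (hab : a ≠ b) : ¬ Injective (eab a b) := by
  intro hinj
  apply hab
  apply hinj
  show (if a = a then b else a) = (if b = a then b else b)
  simp [Ne.symm hab]

lemma tt_eq_id {t : Fin n → Fin n} (ht : Injective t) (h3 : t ∘ t ∘ t = t) :
    t ∘ t = id := by
  funext i
  exact ht (congrFun h3 i)

lemma comp_self_noninj {t : Fin n → Fin n} (ht : ¬ Injective t) : ¬ Injective (t ∘ t) :=
  comp_noninj_left ht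

/-- If `η` is a nonidentity idempotent endomorphism and `η ∘ γ = γ` for an endomorphism `γ`,
then `γ` is idempotent. -/
theorem KEY (hn : 5 ≤ n) {η γ : (Fin n → Fin n) → (Fin n → Fin n)}
    (hη : IsEndo η) (hηid : ∀ x, η (η x) = η x) (hηne : η ≠ id)
    (hγ : IsEndo γ) (h : ∀ x, η (γ x) = γ x) :
    ∀ s, γ (γ s) = γ s := by
  classical
  rcases idem_classification hn hη hηid with hcontra | ⟨t, e, hodd, heven, hsing, h3t, hte, het, hee⟩
  · exact absurd hcontra hηne
  -- values of γ lie in {t, t∘t, e}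
  have hval : ∀ s, γ s = t ∨ γ s = t ∘ t ∨ γ s = e := by
    intro s
    rcases trichotomy (γ s) with ho | he' | hni
    · exact Or.inl ((h s).symm.trans (hodd _ ho))
    · exact Or.inr (Or.inl ((h s).symm.trans (heven _ he')))
    · exact Or.inr (Or.inr ((h s).symm.trans (hsing _ hni)))
  -- pigeonhole: γ collapses two distinct permutations
  obtain ⟨i0, i1, i2, h01, h02, h12⟩ :
      ∃ a b c : Fin n, a ≠ b ∧ a ≠ c ∧ b ≠ c :=
    ⟨⟨0, by omega⟩, ⟨1, by omega⟩, ⟨2, by omega⟩, by simp [Fin.ext_iff],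
      by simp [Fin.ext_iff], by simp [Fin.ext_iff]⟩
  have hcol : ∃ σ τ : Equiv.Perm (Fin n), ⇑σ ≠ ⇑τ ∧ γ ⇑σ = γ ⇑τ := by
    set π1 : Equiv.Perm (Fin n) := 1
    set π2 : Equiv.Perm (Fin n) := Equiv.swap i0 i1
    set π3 : Equiv.Perm (Fin n) := Equiv.swap i1 i2
    set π4 : Equiv.Perm (Fin n) := Equiv.swap i0 i2
    have d12 : (⇑π1 : Fin n → Fin n) ≠ ⇑π2 := by
      intro hc
      have := congrFun hc i0
      simp [π1, π2] at this
      exact h01 this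
    have d13 : (⇑π1 : Fin n → Fin n) ≠ ⇑π3 := by
      intro hc
      have := congrFun hc i1
      simp [π1, π3] at this
      exact h12 this
    have d14 : (⇑π1 : Fin n → Fin n) ≠ ⇑π4 := by
      intro hc
      have := congrFun hc i0
      simp [π1, π4] at this
      exact h02 this
    have d23 : (⇑π2 : Fin n → Fin n) ≠ ⇑π3 := by
      intro hc
      have := congrFun hc i0
      rw [show π2 i0 = i1 from Equiv.swap_apply_left _ _,
        show π3 i0 = i0 from Equiv.swap_apply_of_ne_of_ne h01 h02] at this
      exact h01 this.symm
    have d24 : (⇑π2 : Fin n → Fin n) ≠ ⇑π4 := by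
      intro hc
      have := congrFun hc i0
      rw [show π2 i0 = i1 from Equiv.swap_apply_left _ _,
        show π4 i0 = i2 from Equiv.swap_apply_left _ _] at this
      exact h12 this
    have d34 : (⇑π3 : Fin n → Fin n) ≠ ⇑π4 := by
      intro hc
      have := congrFun hc i1
      rw [show π3 i1 = i2 from Equiv.swap_apply_left _ _,
        show π4 i1 = i1 from Equiv.swap_apply_of_ne_of_ne (Ne.symm h01) h12] at this
      exact h12 this.symm
    rcases four_in_three (hval ⇑π1) (hval ⇑π2) (hval ⇑π3) (hval ⇑π4) with
      hh | hh | hh | hh | hh | hh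
    · exact ⟨π1, π2, d12, hh⟩
    · exact ⟨π1, π3, d13, hh⟩
    · exact ⟨π1, π4, d14, hh⟩
    · exact ⟨π2, π3, d23, hh⟩
    · exact ⟨π2, π4, d24, hh⟩
    · exact ⟨π3, π4, d34, hh⟩
  obtain ⟨t', e', godd, geven, gsing, g3t, gte, get, gee⟩ := lemmaB hn hγ hcol
  -- t', t'∘t', e' are values of γ, hence fixed by η
  have hswap_odd : IsOddPerm (⇑(Equiv.swap i0 i1) : Fin n → Fin n) :=
    ⟨Equiv.swap i0 i1, Equiv.Perm.sign_swap h01, rfl⟩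
  have ht'val : γ ⇑(Equiv.swap i0 i1) = t' := godd _ hswap_odd
  have hfix_t' : η t' = t' := by rw [← ht'val]; exact h _
  have htt'val : γ id = t' ∘ t' := geven _ even_id
  have hfix_tt' : η (t' ∘ t') = t' ∘ t' := by rw [← htt'val]; exact h _
  have he'val : γ (eab i0 i1) = e' := gsing _ (eab_noninj h01)
  have hfix_e' : η e' = e' := by rw [← he'val]; exact h _
  -- goal reduces to fixing of the three values
  have fact_e' : ¬ Injective e' → γ e' = e' := fun hni => gsing _ hni
  have main : γ t' = t' ∧ γ (t' ∘ t') = t' ∘ t' ∧ γ e' = e' := by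
    rcases trichotomy t' with ho' | he'' | hni'
    · -- t' odd
      obtain ⟨π, hπ, hπc⟩ := ho'
      have f1 : γ t' = t' := godd _ ⟨π, hπ, hπc⟩
      have heventt' : IsEvenPerm (t' ∘ t') := by
        refine ⟨π * π, ?_, ?_⟩
        · rw [map_mul, hπ]; decide
        · rw [← hπc]; rfl
      have f2 : γ (t' ∘ t') = t' ∘ t' := geven _ heventt'
      refine ⟨f1, f2, ?_⟩
      by_cases hi : Injective e'
      · have he'id : e' = id := bij_idem_eq_id gee hi
        have htinj : Injective t' := by rw [← hπc]; exact π.injective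
        have htt : t' ∘ t' = id := tt_eq_id htinj g3t
        rw [he'id, ← htt'val.symm, htt]
      · exact fact_e' hi
    · -- t' even : t' = id
      obtain ⟨π, hπ, hπc⟩ := he''
      have htinj : Injective t' := by rw [← hπc]; exact π.injective
      have heventt' : IsEvenPerm (t' ∘ t') := by
        refine ⟨π * π, ?_, ?_⟩
        · rw [map_mul, hπ]; decide
        · rw [← hπc]; rfl
      have h1 : t' ∘ t' = t' := by
        have ha := hfix_tt'
        rw [heven _ heventt'] at ha
        have hb := hfix_t'
        rw [heven _ ⟨π, hπ, hπc⟩] at hb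
        rw [← ha]; exact hb
      have ht'id : t' = id := bij_idem_eq_id h1 htinj
      have hγid : γ id = id := by
        have := htt'val
        rw [ht'id] at this
        simpa using this
      have f3 : γ e' = e' := by
        by_cases hi : Injective e'
        · rw [bij_idem_eq_id gee hi, hγid]
        · exact fact_e' hi
      refine ⟨?_, ?_, f3⟩
      · rw [ht'id, hγid]
      · rw [ht'id, show (id : Fin n → Fin n) ∘ id = id from rfl, hγid]
    · -- t' noninjective
      have ht'e : t' = e := by
        have hx := hfix_t'
        rw [hsing _ hni'] at hx
        exact hx.symm
      have htt'ni : ¬ Injective (t' ∘ t') := comp_self_noninj hni'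
      have htt'e : t' ∘ t' = t' := by
        have hx := hfix_tt'
        rw [hsing _ htt'ni] at hx
        rw [← hx, ht'e]
      have he'ni : ¬ Injective e' := by
        intro hi
        have he'id : e' = id := bij_idem_eq_id gee hi
        have ht'id : t' = id := by
          have hz := gte
          rw [he'id] at hz
          simpa using hz
        rw [ht'id] at hni'
        exact hni' injective_id
      have he'e : e' = e := by
        have hx := hfix_e'
        rw [hsing _ he'ni] at hx
        exact hx.symm
      have f1 : γ t' = t' := by
        rw [gsing _ hni', he'e, ht'e]
      refine ⟨f1, ?_, fact_e' he'ni⟩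
      rw [htt'e]; exact f1
  intro s
  rcases trichotomy s with ho | he' | hni
  · rw [godd _ ho, main.1]
  · rw [geven _ he', main.2.1]
  · rw [gsing _ hni, main.2.2]

theorem KEY2 (hn : 5 ≤ n) {α β : (Fin n → Fin n) → (Fin n → Fin n)}
    (hα : IsEndo α) (hαid : ∀ x, α (α x) = α x) (hαne : α ≠ id)
    (hβ : IsEndo β) (hβid : ∀ x, β (β x) = β x) (hβne : β ≠ id)
    (hab : ∀ x, α (β x) = β x) (hba : ∀ x, β (α x) = α x) : α = β := by
  rcases idem_classification hn hα hαid with hc | ⟨t, e, aodd, aeven, asing, a3t, ate, aet, aee⟩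
  · exact absurd hc hαne
  rcases idem_classification hn hβ hβid with hc | ⟨t', e', bodd, beven, bsing, b3t, bte, bet, bee⟩
  · exact absurd hc hβne
  obtain ⟨i0, i1, h01⟩ : ∃ a b : Fin n, a ≠ b :=
    ⟨⟨0, by omega⟩, ⟨1, by omega⟩, by simp [Fin.ext_iff]⟩
  have hswapodd : IsOddPerm (⇑(Equiv.swap i0 i1) : Fin n → Fin n) :=
    ⟨_, Equiv.Perm.sign_swap h01, rfl⟩
  have htval : α ⇑(Equiv.swap i0 i1) = t := aodd _ hswapodd
  have ht'val : β ⇑(Equiv.swap i0 i1) = t' := bodd _ hswapodd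
  have httval : α id = t ∘ t := aeven _ even_id
  have htt'val : β id = t' ∘ t' := beven _ even_id
  have heval : α (eab i0 i1) = e := asing _ (eab_noninj h01)
  have he'val : β (eab i0 i1) = e' := bsing _ (eab_noninj h01)
  have hfix_t' : α t' = t' := by rw [← ht'val]; exact hab _
  have hfix_e' : α e' = e' := by rw [← he'val]; exact hab _
  have hfix_t : β t = t := by rw [← htval]; exact hba _
  have hfix_e : β e = e := by rw [← heval]; exact hba _
  have hee' : e = e' := by
    by_cases hi : Injective e
    · have heid : e = id := bij_idem_eq_id aee hi
      by_cases hi' : Injective e'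
      · rw [heid, bij_idem_eq_id bee hi']
      · have hx := hfix_e'
        rw [asing _ hi'] at hx
        exact hx
    · have hx := hfix_e
      rw [bsing _ hi] at hx
      exact hx.symm
  have htt' : t = t' := by
    rcases trichotomy t with ho | he'' | hni
    · have hx := hfix_t
      rw [bodd _ ho] at hx
      exact hx.symm
    · obtain ⟨π, hπ, hπc⟩ := he''
      have htinj : Injective t := by rw [← hπc]; exact π.injective
      have hx := hfix_t
      rw [beven _ ⟨π, hπ, hπc⟩] at hx
      rcases trichotomy t' with ho' | he''' | hni'
      · have hy := hfix_t'
        rw [aodd _ ho'] at hy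
        exact hy
      · obtain ⟨π', hπ', hπc'⟩ := he'''
        have ht'inj : Injective t' := by rw [← hπc']; exact π'.injective
        have h1 : t ∘ t = id := tt_eq_id htinj a3t
        have h2 : t' ∘ t' = id := tt_eq_id ht'inj b3t
        have hy := hfix_t'
        rw [aeven _ ⟨π', hπ', hπc'⟩] at hy
        rw [← hx, h2, ← hy, h1]
      · have hy := hfix_t'
        rw [asing _ hni'] at hy
        have h2 : t = e := by
          rw [← hx, ← hy]
          exact aee
        exact h2.trans hy
    · have hx := hfix_t
      rw [bsing _ hni] at hx
      rcases trichotomy t' with ho' | he''' | hni'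
      · have hy := hfix_t'
        rw [aodd _ ho'] at hy
        exact hy
      · obtain ⟨π', hπ', hπc'⟩ := he'''
        have hy := hfix_t'
        rw [aeven _ ⟨π', hπ', hπc'⟩] at hy
        rw [← hy, ← hx]
        exact bee.symm
      · have hy := hfix_t'
        rw [asing _ hni'] at hy
        exact hx.symm.trans (hee'.symm.trans hy)
  funext s
  rcases trichotomy s with ho | he'' | hni
  · rw [aodd _ ho, bodd _ ho, htt']
  · rw [aeven _ he'', beven _ he'', htt']
  · rw [asing _ hni, bsing _ hni, hee']


/-- For `n ≥ 5` and semigroup endomorphisms `α`, `β` of `T_n`, one has `α L~ β`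
iff `α = β`, or neither `α` nor `β` is an idempotent different from the identity
endomorphism. -/
theorem Ltilde_characterisation (n : ℕ) (hn : 5 ≤ n)
    (α β : (Fin n → Fin n) → (Fin n → Fin n)) (hα : IsEndo α) (hβ : IsEndo β) :
    (∀ η : (Fin n → Fin n) → (Fin n → Fin n), IsEndo η → (fun x => η (η x)) = η →
        ((fun x => η (α x)) = α ↔ (fun x => η (β x)) = β)) ↔
      (α = β ∨
        (((fun x => α (α x)) = α → α = id) ∧ ((fun x => β (β x)) = β → β = id))) := by
  classical
  constructor
  · intro hL
    by_cases hA : (fun x => α (α x)) = α → α = id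
    · by_cases hB : (fun x => β (β x)) = β → β = id
      · exact Or.inr ⟨hA, hB⟩
      · left
        push_neg at hB
        obtain ⟨hBidem, hBne⟩ := hB
        have h1 : (fun x => β (α x)) = α := (hL β hβ hBidem).mpr hBidem
        have hαidem : ∀ x, α (α x) = α x :=
          KEY hn hβ (fun x => congrFun hBidem x) hBne hα (fun x => congrFun h1 x)
        have hαne : α ≠ id := by
          intro hid0
          apply hBne
          rw [hid0] at h1
          funext x
          exact congrFun h1 x
        have h2 : (fun x => α (β x)) = β := (hL α hα (funext hαidem)).mp (funext hαidem)
        exact KEY2 hn hα hαidem hαne hβ (fun x => congrFun hBidem x) hBne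
          (fun x => congrFun h2 x) (fun x => congrFun h1 x)
    · left
      push_neg at hA
      obtain ⟨hAidem, hAne⟩ := hA
      have h2 : (fun x => α (β x)) = β := (hL α hα hAidem).mp hAidem
      have hβidem : ∀ x, β (β x) = β x :=
        KEY hn hα (fun x => congrFun hAidem x) hAne hβ (fun x => congrFun h2 x)
      have hβne : β ≠ id := by
        intro hid0
        apply hAne
        rw [hid0] at h2
        funext x
        exact congrFun h2 x
      have h1 : (fun x => β (α x)) = α := (hL β hβ (funext hβidem)).mpr (funext hβidem)
      exact KEY2 hn hα (fun x => congrFun hAidem x) hAne hβ hβidem hβne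
        (fun x => congrFun h2 x) (fun x => congrFun h1 x)
  · intro hR η hηe hηidem
    rcases hR with rfl | ⟨hA, hB⟩
    · exact Iff.rfl
    · have keylem : ∀ γ : (Fin n → Fin n) → (Fin n → Fin n), IsEndo γ →
          ((fun x => γ (γ x)) = γ → γ = id) →
          (((fun x => η (γ x)) = γ) ↔ η = id) := by
        intro γ hγe hγS
        constructor
        · intro hfix
          by_cases hηne : η = id
          · exact hηne
          · exfalso
            have hγidem : ∀ s, γ (γ s) = γ s :=
              KEY hn hηe (fun x => congrFun hηidem x) hηne hγe (fun x => congrFun hfix x)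
            have hγid : γ = id := hγS (funext hγidem)
            apply hηne
            rw [hγid] at hfix
            funext x
            exact congrFun hfix x
        · intro hi
          rw [hi]
          funext x
          rfl
      rw [keylem α hα hA, keylem β hβ hB]
end

section
/- Let n ≥ 5. Then the endomorphism monoid of T_n is: (a) left abundant: for every semigroup endomorphism α of T_n there exists an idempotent semigroup endomorphism η such that for all semigroup endomorphisms γ, δ one has γ·η = δ·η if and only if γ·α = δ·α; (b) right Fountain: for every semigroup endomorphism α there exists an idempotent semigroup endomorphism η such that for every idempotent semigroup endomorphism ζ one has η·ζ = η if and only if α·ζ = α; but (c) not right abundant: there exists a semigroup endomorphism α such that for every idempotent semigroup endomorphism η it is not the case that for all semigroup endomorphisms γ, δ one has η·γ = η·δ if and only if α·γ = α·δ. -/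
namespace T19
open Equiv Function

variable {n : ℕ}

/-- constant map -/
def cst (c : Fin n) : Fin n → Fin n := fun _ => c

/-- the rank `n-1` idempotent sending `a` to `b` -/
def eps (a b : Fin n) : Fin n → Fin n := fun z => if z = a then b else z

/-- conjugation endomorphism -/
def conjEndo (σ : Perm (Fin n)) : (Fin n → Fin n) → (Fin n → Fin n) :=
  fun s => ⇑σ ∘ s ∘ ⇑σ⁻¹

lemma coe_comp (σ τ : Perm (Fin n)) : ⇑σ ∘ ⇑τ = ⇑(σ * τ) := by
  funext z; simp [Perm.mul_apply]

lemma odd_bij {s : Fin n → Fin n} (h : IsOddPerm s) : Bijective s := by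
  obtain ⟨σ, -, rfl⟩ := h; exact σ.bijective

lemma even_bij {s : Fin n → Fin n} (h : IsEvenPerm s) : Bijective s := by
  obtain ⟨σ, -, rfl⟩ := h; exact σ.bijective

lemma not_odd_and_even {s : Fin n → Fin n} (h : IsOddPerm s) (h' : IsEvenPerm s) : False := by
  obtain ⟨σ, hs, rfl⟩ := h
  obtain ⟨τ, ht, hts⟩ := h'
  have : τ = σ := Equiv.coe_fn_injective hts
  rw [this, hs] at ht
  exact absurd ht (by decide)

lemma odd_or_even_of_bijective {s : Fin n → Fin n} (hb : Bijective s) :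
    IsOddPerm s ∨ IsEvenPerm s := by
  set σ := Equiv.ofBijective s hb with hσ
  rcases Int.units_eq_one_or (Equiv.Perm.sign σ) with h | h
  · exact Or.inr ⟨σ, h, rfl⟩
  · exact Or.inl ⟨σ, h, rfl⟩

lemma comp_mk {u v : ℤˣ} {s s' : Fin n → Fin n}
    (h : ∃ σ : Perm (Fin n), Equiv.Perm.sign σ = u ∧ ⇑σ = s)
    (h' : ∃ σ : Perm (Fin n), Equiv.Perm.sign σ = v ∧ ⇑σ = s') :
    ∃ σ : Perm (Fin n), Equiv.Perm.sign σ = u * v ∧ ⇑σ = s ∘ s' := by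
  obtain ⟨σ, h1, rfl⟩ := h
  obtain ⟨τ, h2, rfl⟩ := h'
  exact ⟨σ * τ, by simp [h1, h2], (coe_comp σ τ).symm⟩

lemma odd_comp_odd {s s' : Fin n → Fin n} (h : IsOddPerm s) (h' : IsOddPerm s') :
    IsEvenPerm (s ∘ s') := by simpa [IsEvenPerm] using comp_mk h h'

lemma odd_comp_even {s s' : Fin n → Fin n} (h : IsOddPerm s) (h' : IsEvenPerm s') :
    IsOddPerm (s ∘ s') := by simpa [IsOddPerm] using comp_mk h h'

lemma even_comp_odd {s s' : Fin n → Fin n} (h : IsEvenPerm s) (h' : IsOddPerm s') :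
    IsOddPerm (s ∘ s') := by simpa [IsOddPerm] using comp_mk h h'

lemma even_comp_even {s s' : Fin n → Fin n} (h : IsEvenPerm s) (h' : IsEvenPerm s') :
    IsEvenPerm (s ∘ s') := by simpa [IsEvenPerm] using comp_mk h h'

lemma not_bij_comp_left {s s' : Fin n → Fin n} (h : ¬ Bijective s) :
    ¬ Bijective (s ∘ s') := by
  intro hb
  exact h ((Finite.surjective_iff_bijective).mp (hb.surjective.of_comp))

lemma not_bij_comp_right {s s' : Fin n → Fin n} (h : ¬ Bijective s') :
    ¬ Bijective (s ∘ s') := by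
  intro hb
  exact h ((Finite.injective_iff_bijective).mp (hb.injective.of_comp))

/-- trichotomy -/
lemma class_trichotomy (s : Fin n → Fin n) :
    IsOddPerm s ∨ (¬ IsOddPerm s ∧ IsEvenPerm s) ∨
      (¬ IsOddPerm s ∧ ¬ IsEvenPerm s ∧ ¬ Bijective s) := by
  by_cases h1 : IsOddPerm s
  · exact Or.inl h1
  by_cases h2 : IsEvenPerm s
  · exact Or.inr (Or.inl ⟨h1, h2⟩)
  refine Or.inr (Or.inr ⟨h1, h2, fun hb => ?_⟩)
  rcases odd_or_even_of_bijective hb with h | h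
  exacts [h1 h, h2 h]

lemma phi_odd {t e s : Fin n → Fin n} (h : IsOddPerm s) : phi t e s = t := by
  simp only [phi, if_pos h]

lemma phi_even {t e s : Fin n → Fin n} (h : IsEvenPerm s) : phi t e s = t ∘ t := by
  have : ¬ IsOddPerm s := fun h' => not_odd_and_even h' h
  simp only [phi, if_neg this, if_pos h]

lemma phi_nonbij {t e s : Fin n → Fin n} (h : ¬ Bijective s) : phi t e s = e := by
  have h1 : ¬ IsOddPerm s := fun h' => h (odd_bij h')
  have h2 : ¬ IsEvenPerm s := fun h' => h (even_bij h')
  simp only [phi, if_neg h1, if_neg h2]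

lemma endo_phi {t e : Fin n → Fin n} (hp : Permissible t e) : IsEndo (phi t e) := by
  obtain ⟨ht3, hte, het, hee⟩ := hp
  have ht4 : (t ∘ t) ∘ t ∘ t = t ∘ t := by
    calc (t ∘ t) ∘ t ∘ t = t ∘ (t ∘ t ∘ t) := by rfl
    _ = t ∘ t := by rw [ht3]
  have htte : (t ∘ t) ∘ e = e := by
    calc (t ∘ t) ∘ e = t ∘ (t ∘ e) := by rfl
    _ = e := by rw [hte, hte]
  have hett : e ∘ (t ∘ t) = e := by
    calc e ∘ (t ∘ t) = (e ∘ t) ∘ t := by rfl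
    _ = e := by rw [het, het]
  intro s s'
  rcases class_trichotomy s with h | ⟨h1, h⟩ | ⟨h1, h2, h⟩ <;>
    rcases class_trichotomy s' with h' | ⟨h1', h'⟩ | ⟨h1', h2', h'⟩
  · rw [phi_odd h, phi_odd h', phi_even (odd_comp_odd h h')]
  · rw [phi_odd h, phi_even h', phi_odd (odd_comp_even h h'), ht3]
  · rw [phi_odd h, phi_nonbij h', phi_nonbij (not_bij_comp_right h'), hte]
  · rw [phi_even h, phi_odd h', phi_odd (even_comp_odd h h')]
    exact ht3.symm
  · rw [phi_even h, phi_even h', phi_even (even_comp_even h h'), ht4]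
  · rw [phi_even h, phi_nonbij h', phi_nonbij (not_bij_comp_right h'), htte]
  · rw [phi_nonbij h, phi_odd h', phi_nonbij (not_bij_comp_left h), het]
  · rw [phi_nonbij h, phi_even h', phi_nonbij (not_bij_comp_left h), hett]
  · rw [phi_nonbij h, phi_nonbij h', phi_nonbij (not_bij_comp_left h), hee]

lemma endo_id : IsEndo (id : (Fin n → Fin n) → (Fin n → Fin n)) := fun _ _ => rfl

lemma endo_const (c : Fin n → Fin n) (hc : c ∘ c = c) :
    IsEndo (fun _ : Fin n → Fin n => c) := fun _ _ => hc.symm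

lemma endo_conj (σ : Perm (Fin n)) : IsEndo (conjEndo σ) := by
  intro s s'
  funext z
  simp [conjEndo]

end T19

section chunk2
namespace T19
open Equiv Function

variable {n : ℕ} {φ : (Fin n → Fin n) → (Fin n → Fin n)}

lemma const_collapse (hφ : IsEndo φ) (hni : ¬ Function.Injective φ) (c d : Fin n) :
    φ (cst c) = φ (cst d) := by
  obtain ⟨x, y, hxy, hne⟩ := Function.not_injective_iff.mp hni
  obtain ⟨a₀, ha₀⟩ := Function.ne_iff.mp hne
  have key : φ (cst (x a₀)) = φ (cst (y a₀)) := by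
    have h1 : φ (x ∘ cst a₀) = φ x ∘ φ (cst a₀) := hφ x (cst a₀)
    have h2 : φ (y ∘ cst a₀) = φ y ∘ φ (cst a₀) := hφ y (cst a₀)
    have : x ∘ cst a₀ = cst (x a₀) := rfl
    rw [this] at h1
    have : y ∘ cst a₀ = cst (y a₀) := rfl
    rw [this] at h2
    rw [h1, h2, hxy]
  set g : Fin n → Fin n := fun z => if z = x a₀ then c else d with hg
  have g1 : g ∘ cst (x a₀) = cst c := by
    funext z; simp [hg, cst]
  have g2 : g ∘ cst (y a₀) = cst d := by
    funext z; simp [hg, cst, ha₀]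
    exact if_neg (Ne.symm ha₀)
  calc φ (cst c) = φ (g ∘ cst (x a₀)) := by rw [g1]
    _ = φ g ∘ φ (cst (x a₀)) := hφ _ _
    _ = φ g ∘ φ (cst (y a₀)) := by rw [key]
    _ = φ (g ∘ cst (y a₀)) := (hφ _ _).symm
    _ = φ (cst d) := by rw [g2]

lemma f_comp (hφ : IsEndo φ) (s : Fin n → Fin n) : φ id ∘ φ s = φ s :=
  (hφ id s).symm

lemma comp_f (hφ : IsEndo φ) (s : Fin n → Fin n) : φ s ∘ φ id = φ s :=
  (hφ s id).symm

lemma coe_inv_comp (τ : Perm (Fin n)) : ⇑τ⁻¹ ∘ ⇑τ = id := by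
  funext z; simp

lemma coe_comp_inv (τ : Perm (Fin n)) : ⇑τ ∘ ⇑τ⁻¹ = id := by
  funext z; simp

lemma exists_not_mem {n : ℕ} (s : Finset (Fin n)) (h : s.card < n) : ∃ c, c ∉ s := by
  by_contra hc
  push_neg at hc
  have : (Finset.univ : Finset (Fin n)) ⊆ s := fun z _ => hc z
  have := Finset.card_le_card this
  simp at this
  omega

lemma exists_sigma_ker (hn : 5 ≤ n) (hφ : IsEndo φ) (hni : ¬ Function.Injective φ) :
    ∃ σ : Perm (Fin n), σ ≠ 1 ∧ φ ⇑σ = φ id := by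
  by_contra hcon
  push_neg at hcon
  -- φ is injective on permutations
  have hinj : ∀ σ τ : Perm (Fin n), φ ⇑σ = φ ⇑τ → σ = τ := by
    intro σ τ hst
    have h1 : φ ⇑(σ * τ⁻¹) = φ id := by
      have h2 := hφ ⇑σ ⇑τ⁻¹
      rw [coe_comp] at h2
      have h3 := hφ ⇑τ ⇑τ⁻¹
      rw [coe_comp_inv] at h3
      rw [h2, hst, ← h3]
    by_contra hne
    exact hcon _ (fun h => hne (by rw [← mul_inv_eq_one]; exact h)) h1
  set f : Fin n → Fin n := φ id with hf
  have hfix : ∀ (s : Fin n → Fin n) (x : Fin n), f (φ s x) = φ s x :=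
    fun s x => congrFun (f_comp hφ s) x
  have hfixf : ∀ x, f (f x) = f x := hfix id
  -- embed Perm (Fin n) into Perm of fixed points of f
  have hto : ∀ (σ : Perm (Fin n)) (y : {y : Fin n // f y = y}), f (φ ⇑σ y.1) = φ ⇑σ y.1 := fun σ y => hfix _ _
  have hlr : ∀ (σ τ: Perm (Fin n)) (y : {y : Fin n // f y = y}), σ * τ = 1 → φ ⇑τ (φ ⇑σ y.1) = y.1 := by
    intro σ τ y hστ
    have h2 := hφ ⇑τ ⇑σ
    rw [coe_comp] at h2
    have : (τ * σ : Perm (Fin n)) = 1 := by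
      have := congrArg (fun x => σ⁻¹ * x * σ) hστ
      simpa [mul_assoc] using this
    rw [this] at h2
    have : φ (⇑(1 : Perm (Fin n))) = f := by
      have : ⇑(1 : Perm (Fin n)) = (id : Fin n → Fin n) := rfl
      rw [this]
    rw [this] at h2
    have := congrFun h2.symm y.1
    simp at this
    rw [this, y.2]
  set Ψ : Perm (Fin n) → Perm {y : Fin n // f y = y} := fun σ =>
    { toFun := fun y => ⟨φ ⇑σ y.1, hto σ y⟩
      invFun := fun y => ⟨φ ⇑σ⁻¹ y.1, hto σ⁻¹ y⟩
      left_inv := by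
        intro y
        apply Subtype.ext
        exact hlr σ σ⁻¹ y (by simp)
      right_inv := by
        intro y
        apply Subtype.ext
        exact hlr σ⁻¹ σ y (by simp) } with hΨ
  have hΨinj : Function.Injective Ψ := by
    intro σ τ h
    apply hinj
    funext x
    have h1 : φ ⇑σ (f x) = φ ⇑τ (f x) := by
      have := congrArg (fun (e : Perm {y : Fin n // f y = y}) => (e ⟨f x, hfixf x⟩).1) h
      simpa [hΨ] using this
    calc φ ⇑σ x = φ ⇑σ (f x) := (congrFun (comp_f hφ ⇑σ) x).symm
      _ = φ ⇑τ (f x) := h1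
      _ = φ ⇑τ x := congrFun (comp_f hφ ⇑τ) x
  have hcard : Fintype.card (Perm (Fin n)) ≤ Fintype.card (Perm {y : Fin n // f y = y}) :=
    Fintype.card_le_of_injective Ψ hΨinj
  rw [Fintype.card_perm, Fintype.card_perm, Fintype.card_fin] at hcard
  have hYle : Fintype.card {y : Fin n // f y = y} ≤ n := by
    have := Fintype.card_le_of_injective (fun y : {y : Fin n // f y = y} => y.1)
      (fun a b h => Subtype.ext h)
    simpa using this
  have hpos : 0 < Fintype.card {y : Fin n // f y = y} :=
    Fintype.card_pos_iff.mpr ⟨⟨f ⟨0, by omega⟩, hfixf _⟩⟩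
  have hYn : Fintype.card {y : Fin n // f y = y} = n := by
    by_contra hne
    have hlt : Fintype.card {y : Fin n // f y = y} < n := lt_of_le_of_ne hYle hne
    have := (Nat.factorial_lt hpos).mpr hlt
    omega
  -- f = id
  have hfid : f = id := by
    funext x
    by_contra hx
    have h2 : Fintype.card {y : Fin n // f y = y} < Fintype.card (Fin n) := by
      exact Fintype.card_subtype_lt (p := fun y => f y = y) hx
    rw [Fintype.card_fin] at h2
    omega
  -- each φ ⇑σ is bijective
  have hbij : ∀ σ : Perm (Fin n), Function.Bijective (φ ⇑σ) := by
    intro σ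
    constructor
    · intro u v huv
      have l : ∀ x, φ ⇑σ⁻¹ (φ ⇑σ x) = x := by
        intro x
        have h2 := hφ ⇑σ⁻¹ ⇑σ
        rw [coe_comp, inv_mul_cancel] at h2
        have : φ ⇑(1 : Perm (Fin n)) = f := rfl
        rw [this, hfid] at h2
        exact congrFun h2.symm x
      rw [← l u, ← l v, huv]
    · intro y
      refine ⟨φ ⇑σ⁻¹ y, ?_⟩
      have h2 := hφ ⇑σ ⇑σ⁻¹
      rw [coe_comp, mul_inv_cancel] at h2
      have : φ ⇑(1 : Perm (Fin n)) = f := rfl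
      rw [this, hfid] at h2
      exact congrFun h2.symm y
  set Φ : Perm (Fin n) → Perm (Fin n) := fun σ => Equiv.ofBijective _ (hbij σ) with hΦ
  have hΦinj : Function.Injective Φ := by
    intro σ τ h
    exact hinj σ τ (congrArg (fun (e : Perm (Fin n)) => (e : Fin n → Fin n)) h)
  have hΦsurj : Function.Surjective Φ := Finite.injective_iff_surjective.mp hΦinj
  -- contradiction via constants
  have h01 : ((⟨0, by omega⟩ : Fin n)) ≠ (⟨1, by omega⟩ : Fin n) := by
    simp [Fin.ext_iff]
  set a₀ : Fin n := ⟨0, by omega⟩ with ha₀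
  set ebar : Fin n → Fin n := φ (cst a₀) with hebar
  have habs : ∀ σ : Perm (Fin n), φ ⇑σ (ebar a₀) = ebar a₀ := by
    intro σ
    have h2 := hφ ⇑σ (cst a₀)
    have : ⇑σ ∘ cst a₀ = cst (σ a₀) := rfl
    rw [this] at h2
    have h3 : φ (cst (σ a₀)) = ebar := (const_collapse hφ hni _ _)
    rw [h3] at h2
    exact (congrFun h2.symm a₀)
  set y₀ : Fin n := ebar a₀ with hy₀
  set w : Fin n := if y₀ = a₀ then ⟨1, by omega⟩ else a₀ with hw
  have hwy : w ≠ y₀ := by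
    rw [hw]
    split
    · rename_i hcase; rw [hcase]; exact fun h => h01 h.symm
    · rename_i hcase; exact fun h => hcase h.symm
  obtain ⟨σ, hσ⟩ := hΦsurj (Equiv.swap y₀ w)
  have hval : φ ⇑σ = ⇑(Equiv.swap y₀ w) := by
    rw [← hσ]
    rfl
  have := habs σ
  rw [hval] at this
  rw [Equiv.swap_apply_left] at this
  exact hwy this

end T19
end chunk2

namespace T19
open Equiv Function

variable {n : ℕ} {φ : (Fin n → Fin n) → (Fin n → Fin n)}

lemma swap_disjoint_commute {a b c d : Fin n} (hca : c ≠ a) (hcb : c ≠ b)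
    (hda : d ≠ a) (hdb : d ≠ b) :
    Equiv.swap a b * Equiv.swap c d = Equiv.swap c d * Equiv.swap a b := by
  have hd : (Equiv.swap a b).Disjoint (Equiv.swap c d) := by
    intro z
    by_cases h1 : z = a
    · subst h1; right; exact Equiv.swap_apply_of_ne_of_ne hca.symm hda.symm
    by_cases h2 : z = b
    · subst h2; right; exact Equiv.swap_apply_of_ne_of_ne hcb.symm hdb.symm
    left; exact Equiv.swap_apply_of_ne_of_ne h1 h2
  exact hd.commute.eq

/-- A nontrivial normal subgroup of the symmetric group contains a 3-cycle. -/
lemma three_cycle_mem (hn : 5 ≤ n) (K : Subgroup (Perm (Fin n))) (hK : K.Normal)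
    (σ₀ : Perm (Fin n)) (hσ₀ : σ₀ ∈ K) (hne : σ₀ ≠ 1) :
    ∃ g : Perm (Fin n), g.IsThreeCycle ∧ g ∈ K := by
  have hmoved : ∃ a, σ₀ a ≠ a := by
    by_contra hc
    push_neg at hc
    exact hne (Equiv.ext hc)
  obtain ⟨a, ha⟩ := hmoved
  set b := σ₀ a with hb
  obtain ⟨c, hc⟩ := exists_not_mem {a, b} (by
    have := Finset.card_insert_le a {b}
    simp at this ⊢
    omega)
  simp [Finset.mem_insert] at hc
  obtain ⟨hca', hcb'⟩ := hc
  have hca : c ≠ a := hca'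
  have hcb : c ≠ b := hcb'
  set d := σ₀ c with hd
  have hba : b ≠ a := ha
  have hdb : d ≠ b := fun h => hca (σ₀.injective h)
  have hρK : Equiv.swap b d * Equiv.swap a c ∈ K := by
    have h1 : Equiv.swap a c * σ₀⁻¹ * (Equiv.swap a c)⁻¹ ∈ K :=
      hK.conj_mem _ (K.inv_mem hσ₀) _
    have h2 : σ₀ * (Equiv.swap a c * σ₀⁻¹ * (Equiv.swap a c)⁻¹) ∈ K := K.mul_mem hσ₀ h1
    have h3 : σ₀ * (Equiv.swap a c * σ₀⁻¹ * (Equiv.swap a c)⁻¹) =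
        Equiv.swap b d * Equiv.swap a c := by
      have h4 := Equiv.swap_apply_apply σ₀ a c
      rw [hb, hd, h4]
      simp only [Equiv.swap_inv, mul_assoc]
    rw [← h3]; exact h2
  -- case analysis on d
  by_cases hdc : d = c
  · -- ρ = swap b c * swap a c, 3-cycle with common point c
    refine ⟨Equiv.swap b d * Equiv.swap a c, ?_, hρK⟩
    rw [hdc, Equiv.swap_comm b c, Equiv.swap_comm a c]
    exact Equiv.Perm.isThreeCycle_swap_mul_swap_same hcb hca hba
  by_cases hda : d = a
  · -- ρ = swap b a * swap a c, common point a
    refine ⟨Equiv.swap b d * Equiv.swap a c, ?_, hρK⟩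
    rw [hda, Equiv.swap_comm b a]
    exact Equiv.Perm.isThreeCycle_swap_mul_swap_same (Ne.symm hba) (Ne.symm hca)
      (fun h => hcb h.symm)
  · -- disjoint case; pick a fifth point e₀
    obtain ⟨e₀, he₀⟩ := exists_not_mem {a, b, c, d} (by
      have h1 := Finset.card_insert_le a {b, c, d}
      have h2 := Finset.card_insert_le b ({c, d} : Finset (Fin n))
      have h3 := Finset.card_insert_le c ({d} : Finset (Fin n))
      simp at h1 h2 h3 ⊢
      omega)
    simp [Finset.mem_insert] at he₀
    obtain ⟨hea', heb', hec', hed'⟩ := he₀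
    have hea : e₀ ≠ a := hea'
    have heb : e₀ ≠ b := heb'
    have hec : e₀ ≠ c := hec'
    have hed : e₀ ≠ d := hed'
    set ρ := Equiv.swap b d * Equiv.swap a c with hρ
    have hρinv : ρ⁻¹ = Equiv.swap a c * Equiv.swap b d := by
      rw [hρ, mul_inv_rev, Equiv.swap_inv, Equiv.swap_inv]
    have hconj : Equiv.swap a e₀ * ρ * (Equiv.swap a e₀)⁻¹ =
        Equiv.swap b d * Equiv.swap e₀ c := by
      rw [hρ]
      have h5 : Equiv.swap a e₀ * (Equiv.swap b d * Equiv.swap a c) * (Equiv.swap a e₀)⁻¹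
          = (Equiv.swap a e₀ * Equiv.swap b d * (Equiv.swap a e₀)⁻¹) *
            (Equiv.swap a e₀ * Equiv.swap a c * (Equiv.swap a e₀)⁻¹) := by group
      rw [h5]
      have h6 : Equiv.swap a e₀ * Equiv.swap b d * (Equiv.swap a e₀)⁻¹ =
          Equiv.swap ((Equiv.swap a e₀) b) ((Equiv.swap a e₀) d) :=
        (Equiv.swap_apply_apply _ _ _).symm
      have h7 : Equiv.swap a e₀ * Equiv.swap a c * (Equiv.swap a e₀)⁻¹ =
          Equiv.swap ((Equiv.swap a e₀) a) ((Equiv.swap a e₀) c) :=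
        (Equiv.swap_apply_apply _ _ _).symm
      rw [h6, h7, Equiv.swap_apply_left,
        Equiv.swap_apply_of_ne_of_ne hba (Ne.symm heb),
        Equiv.swap_apply_of_ne_of_ne hda (Ne.symm hed),
        Equiv.swap_apply_of_ne_of_ne hca (Ne.symm hec)]
    have hmem : Equiv.swap a e₀ * ρ * (Equiv.swap a e₀)⁻¹ * ρ⁻¹ ∈ K :=
      K.mul_mem (hK.conj_mem _ hρK _) (K.inv_mem hρK)
    have hcomp : Equiv.swap a e₀ * ρ * (Equiv.swap a e₀)⁻¹ * ρ⁻¹ =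
        Equiv.swap c e₀ * Equiv.swap c a := by
      rw [hconj, hρinv]
      have hcsw : Equiv.swap b d * Equiv.swap e₀ c = Equiv.swap e₀ c * Equiv.swap b d :=
        swap_disjoint_commute heb hed hcb (fun h => hdc h.symm)
      have hcsw2 : Equiv.swap b d * Equiv.swap a c = Equiv.swap a c * Equiv.swap b d :=
        swap_disjoint_commute (Ne.symm hba) (fun h => hda h.symm) hcb (fun h => hdc h.symm)
      calc Equiv.swap b d * Equiv.swap e₀ c * (Equiv.swap a c * Equiv.swap b d)
          = Equiv.swap e₀ c * Equiv.swap b d * (Equiv.swap b d * Equiv.swap a c) := by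
            rw [hcsw, hcsw2]
        _ = Equiv.swap e₀ c * Equiv.swap a c := by
            rw [mul_assoc, ← mul_assoc (Equiv.swap b d)]
            simp [Equiv.swap_mul_self]
        _ = Equiv.swap c e₀ * Equiv.swap c a := by
            rw [Equiv.swap_comm e₀ c, Equiv.swap_comm a c]
    refine ⟨Equiv.swap c e₀ * Equiv.swap c a, ?_, by rw [← hcomp]; exact hmem⟩
    exact Equiv.Perm.isThreeCycle_swap_mul_swap_same (Ne.symm hec) hca hea

lemma normal_contains_alternating (hn : 5 ≤ n) (K : Subgroup (Perm (Fin n))) (hK : K.Normal)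
    (σ₀ : Perm (Fin n)) (hσ₀ : σ₀ ∈ K) (hne : σ₀ ≠ 1) :
    alternatingGroup (Fin n) ≤ K := by
  obtain ⟨g, hg3, hgK⟩ := three_cycle_mem hn K hK σ₀ hσ₀ hne
  have h5 : 5 ≤ Fintype.card (Fin n) := by simpa using hn
  haveI := hK
  have hNormal : (K.subgroupOf (alternatingGroup (Fin n))).Normal := inferInstance
  have hsub : ({⟨g, hg3.mem_alternatingGroup⟩} : Set (alternatingGroup (Fin n))) ⊆
      ↑(K.subgroupOf (alternatingGroup (Fin n))) := by
    intro x hx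
    rw [Set.mem_singleton_iff] at hx
    subst hx
    rw [SetLike.mem_coe, Subgroup.mem_subgroupOf]
    exact hgK
  have hle := Subgroup.normalClosure_le_normal hsub
  rw [Equiv.Perm.IsThreeCycle.alternating_normalClosure (by simpa using hn) hg3] at hle
  have : K.subgroupOf (alternatingGroup (Fin n)) = ⊤ := eq_top_iff.mpr hle
  exact Subgroup.subgroupOf_eq_top.mp this

lemma even_collapse (hn : 5 ≤ n) (hφ : IsEndo φ) (hni : ¬ Function.Injective φ) :
    ∀ σ : Perm (Fin n), Equiv.Perm.sign σ = 1 → φ ⇑σ = φ id := by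
  obtain ⟨σ₀, hσ₀ne, hσ₀⟩ := exists_sigma_ker hn hφ hni
  set K : Subgroup (Perm (Fin n)) :=
    { carrier := {σ : Perm (Fin n) | φ ⇑σ = φ id}
      mul_mem' := by
        intro x y hx hy
        simp only [Set.mem_setOf_eq] at *
        have h2 := hφ ⇑x ⇑y
        rw [coe_comp] at h2
        rw [h2, hx, hy]
        exact f_comp hφ id
      one_mem' := by
        simp only [Set.mem_setOf_eq, Equiv.Perm.coe_one]
      inv_mem' := by
        intro x hx
        simp only [Set.mem_setOf_eq] at *
        have h2 := hφ ⇑x ⇑x⁻¹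
        rw [coe_comp, mul_inv_cancel, Equiv.Perm.coe_one] at h2
        calc φ ⇑x⁻¹ = φ id ∘ φ ⇑x⁻¹ := (f_comp hφ _).symm
          _ = φ ⇑x ∘ φ ⇑x⁻¹ := by rw [hx]
          _ = φ id := h2.symm } with hKdef
  have hKnormal : K.Normal := by
    constructor
    intro x hx τ
    have hx' : φ ⇑x = φ id := hx
    show φ ⇑(τ * x * τ⁻¹) = φ id
    have h2 : ⇑(τ * x * τ⁻¹) = ⇑τ ∘ ⇑x ∘ ⇑τ⁻¹ := by
      rw [coe_comp, coe_comp, mul_assoc]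
    rw [h2]
    have h3 := hφ ⇑τ (⇑x ∘ ⇑τ⁻¹)
    have h4 := hφ ⇑x ⇑τ⁻¹
    rw [h3, h4, hx']
    have h5 : φ id ∘ φ ⇑τ⁻¹ = φ ⇑τ⁻¹ := f_comp hφ _
    rw [h5]
    have h6 := hφ ⇑τ ⇑τ⁻¹
    rw [coe_comp, mul_inv_cancel, Equiv.Perm.coe_one] at h6
    exact h6.symm
  have hAle := normal_contains_alternating hn K hKnormal σ₀ hσ₀ hσ₀ne
  intro σ hσ
  exact hAle (Equiv.Perm.mem_alternatingGroup.mpr hσ)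

end T19

namespace T19
open Equiv Function

variable {n : ℕ} {φ : (Fin n → Fin n) → (Fin n → Fin n)}

lemma odd_collapse (hn : 5 ≤ n) (hφ : IsEndo φ) (hni : ¬ Function.Injective φ)
    (σ τ : Perm (Fin n)) (hσ : Equiv.Perm.sign σ = -1) (hτ : Equiv.Perm.sign τ = -1) :
    φ ⇑σ = φ ⇑τ := by
  have heven := even_collapse hn hφ hni
  have hρ : Equiv.Perm.sign (σ * τ⁻¹) = 1 := by
    rw [map_mul, map_inv, hσ, hτ]
    decide
  have h1 : φ ⇑(σ * τ⁻¹ * τ) = φ ⇑(σ * τ⁻¹) ∘ φ ⇑τ := by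
    rw [← coe_comp]
    exact hφ _ _
  rw [heven _ hρ] at h1
  have h2 : σ * τ⁻¹ * τ = σ := by group
  rw [h2] at h1
  rw [h1]
  exact f_comp hφ _

lemma eps_self (a b : Fin n) : eps a b ∘ eps a b = eps a b := by
  funext z
  simp only [comp_apply, eps]
  by_cases h : z = a
  · simp only [if_pos h]
    split_ifs <;> rfl
  · simp only [if_neg h]

lemma eps_nonbij (a b : Fin n) (hab : a ≠ b) : ¬ Function.Bijective (eps a b) := by
  intro hbij
  have h1 : eps a b a = b := by simp [eps]
  have h2 : eps a b b = b := by simp [eps, hab.symm]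
  exact hab (hbij.injective (h1.trans h2.symm))

lemma swap_comp_eps (a b : Fin n) (hab : a ≠ b) :
    ⇑(Equiv.swap a b) ∘ eps a b = eps b a := by
  funext z
  by_cases h1 : z = a
  · subst h1
    simp [eps, hab, Equiv.swap_apply_right]
  by_cases h2 : z = b
  · subst h2
    simp [eps, hab.symm, h1, Equiv.swap_apply_right]
  · simp [eps, h1, h2, Equiv.swap_apply_of_ne_of_ne h1 h2]

lemma eps_comp_swap (a b : Fin n) (hab : a ≠ b) :
    eps a b ∘ ⇑(Equiv.swap a b) = eps a b := by
  funext z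
  by_cases h1 : z = a
  · subst h1
    simp [eps, hab, hab.symm, Equiv.swap_apply_left]
  by_cases h2 : z = b
  · subst h2
    simp [eps, hab, Equiv.swap_apply_right]
  · simp [eps, h1, h2, Equiv.swap_apply_of_ne_of_ne h1 h2]

lemma eps_conj (σ : Perm (Fin n)) (a b : Fin n) :
    ⇑σ ∘ eps a b ∘ ⇑σ⁻¹ = eps (σ a) (σ b) := by
  funext z
  by_cases h : z = σ a
  · subst h
    simp [eps]
  · have h2 : σ⁻¹ z ≠ a := by
      intro hc
      exact h (by rw [← hc]; simp)
    simp [eps, h, show σ.symm z ≠ a from h2]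

lemma exists_even_extend (hn : 5 ≤ n) (x y a b : Fin n) (hxy : x ≠ y) (hab : a ≠ b) :
    ∃ σ : Perm (Fin n), Equiv.Perm.sign σ = 1 ∧ σ x = a ∧ σ y = b := by
  classical
  set τ := Equiv.swap a x with hτ
  have hτx : τ x = a := Equiv.swap_apply_right a x
  have hτya : τ y ≠ a := by
    intro hc
    have : τ (τ y) = τ a := by rw [hc]
    rw [Equiv.swap_apply_self, Equiv.swap_apply_left] at this
    exact hxy this.symm
  set σ₁ := Equiv.swap b (τ y) * τ with hσ₁
  have hx1 : σ₁ x = a := by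
    rw [hσ₁, Equiv.Perm.mul_apply, hτx]
    exact Equiv.swap_apply_of_ne_of_ne hab (Ne.symm hτya)
  have hy1 : σ₁ y = b := by
    rw [hσ₁, Equiv.Perm.mul_apply]
    exact Equiv.swap_apply_right b (τ y)
  rcases Int.units_eq_one_or (Equiv.Perm.sign σ₁) with h | h
  · exact ⟨σ₁, h, hx1, hy1⟩
  · obtain ⟨c, hc⟩ := exists_not_mem {x, y} (by
      have := Finset.card_insert_le x ({y} : Finset (Fin n))
      simp at this ⊢; omega)
    obtain ⟨d, hd⟩ := exists_not_mem {x, y, c} (by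
      have h1 := Finset.card_insert_le x ({y, c} : Finset (Fin n))
      have h2 := Finset.card_insert_le y ({c} : Finset (Fin n))
      simp at h1 h2 ⊢; omega)
    simp [Finset.mem_insert] at hc hd
    have hcd : c ≠ d := fun hcc => hd.2.2 hcc.symm
    refine ⟨σ₁ * Equiv.swap c d, ?_, ?_, ?_⟩
    · rw [map_mul, h, Equiv.Perm.sign_swap hcd]; decide
    · rw [Equiv.Perm.mul_apply, Equiv.swap_apply_of_ne_of_ne
        (fun hh => hc.1 hh.symm) (fun hh => hd.1 hh.symm), hx1]
    · rw [Equiv.Perm.mul_apply, Equiv.swap_apply_of_ne_of_ne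
        (fun hh => hc.2 hh.symm) (fun hh => hd.2.1 hh.symm), hy1]

lemma atom_eq (hn : 5 ≤ n) (hφ : IsEndo φ) (hni : ¬ Function.Injective φ)
    (a b c d : Fin n) (hab : a ≠ b) (hcd : c ≠ d) : φ (eps a b) = φ (eps c d) := by
  obtain ⟨σ, hsign, hc, hd⟩ := exists_even_extend hn c d a b hcd hab
  have h1 : eps a b = ⇑σ ∘ (eps c d ∘ ⇑σ⁻¹) := by
    have := eps_conj σ c d
    rw [hc, hd] at this
    rw [← this]
  have heven := even_collapse hn hφ hni
  have hsinv : Equiv.Perm.sign σ⁻¹ = 1 := by rw [map_inv, hsign]; rfl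
  calc φ (eps a b) = φ (⇑σ ∘ (eps c d ∘ ⇑σ⁻¹)) := by rw [← h1]
    _ = φ ⇑σ ∘ φ (eps c d ∘ ⇑σ⁻¹) := hφ _ _
    _ = φ ⇑σ ∘ (φ (eps c d) ∘ φ ⇑σ⁻¹) := by rw [hφ (eps c d) ⇑σ⁻¹]
    _ = φ id ∘ (φ (eps c d) ∘ φ id) := by rw [heven _ hsign, heven _ hsinv]
    _ = φ id ∘ φ (eps c d) := by rw [comp_f hφ]
    _ = φ (eps c d) := f_comp hφ _

end T19

namespace T19
open Equiv Function

variable {n : ℕ} {φ : (Fin n → Fin n) → (Fin n → Fin n)}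

lemma surj_of_image_univ {s : Fin n → Fin n}
    (h : (Finset.image s Finset.univ).card = n) : Function.Bijective s := by
  rw [← Finite.surjective_iff_bijective]
  intro y
  have h2 : Finset.image s Finset.univ = Finset.univ :=
    Finset.eq_univ_of_card _ (by rw [h]; simp)
  have : y ∈ Finset.image s Finset.univ := by rw [h2]; exact Finset.mem_univ y
  obtain ⟨x, -, hx⟩ := Finset.mem_image.mp this
  exact ⟨x, hx⟩

lemma singular_collapse (hn : 5 ≤ n) (hφ : IsEndo φ) (hni : ¬ Function.Injective φ) :
    ∀ s : Fin n → Fin n, ¬ Function.Bijective s →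
      φ s = φ (eps ⟨0, by omega⟩ ⟨1, by omega⟩) := by
  have h01 : (⟨0, by omega⟩ : Fin n) ≠ ⟨1, by omega⟩ := by simp [Fin.ext_iff]
  suffices H : ∀ (k : ℕ) (s : Fin n → Fin n), n - (Finset.image s Finset.univ).card ≤ k →
      ¬ Function.Bijective s → φ s = φ (eps ⟨0, by omega⟩ ⟨1, by omega⟩) by
    exact fun s hs => H n s (by omega) hs
  intro k
  induction k with
  | zero =>
    intro s hc hs
    exfalso
    have hle : (Finset.image s Finset.univ).card ≤ n := by
      have := Finset.card_le_univ (Finset.image s Finset.univ)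
      simpa using this
    exact hs (surj_of_image_univ (by omega))
  | succ k ih =>
    intro s hc hs
    have hninj : ¬ Function.Injective s := fun hi => hs (Finite.injective_iff_bijective.mp hi)
    obtain ⟨a, b, hval, hne⟩ := Function.not_injective_iff.mp hninj
    have hba : b ≠ a := Ne.symm hne
    have himlt : (Finset.image s Finset.univ).card < n := by
      have hle : (Finset.image s Finset.univ).card ≤ n := by
        have := Finset.card_le_univ (Finset.image s Finset.univ)
        simpa using this
      rcases lt_or_eq_of_le hle with h | h
      · exact h
      · exact absurd (surj_of_image_univ h) hs
    obtain ⟨c, hcmem⟩ := exists_not_mem _ himlt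
    set s' := Function.update s a c with hs'
    have hdecomp : s = s' ∘ eps a b := by
      funext z
      by_cases hz : z = a
      · subst hz
        have h1 : eps z b z = b := by simp [eps]
        simp only [comp_apply, h1]
        rw [hs', Function.update_of_ne hba, ← hval]
      · have h1 : eps a b z = z := by simp [eps, hz]
        simp only [comp_apply, h1]
        rw [hs', Function.update_of_ne hz]
    have himage : Finset.image s' Finset.univ = insert c (Finset.image s Finset.univ) := by
      ext y
      simp only [Finset.mem_image, Finset.mem_insert, Finset.mem_univ, true_and]
      constructor
      · rintro ⟨z, hz⟩
        by_cases hza : z = a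
        · subst hza; left; rw [← hz, hs', Function.update_self]
        · right; exact ⟨z, by rw [← hz, hs', Function.update_of_ne hza]⟩
      · rintro (hy | ⟨z, hz⟩)
        · exact ⟨a, by rw [hs', Function.update_self, hy]⟩
        · by_cases hza : z = a
          · refine ⟨b, ?_⟩
            rw [hs', Function.update_of_ne hba, ← hval, ← hza, hz]
          · exact ⟨z, by rw [hs', Function.update_of_ne hza, hz]⟩
    have hcard' : (Finset.image s' Finset.univ).card
        = (Finset.image s Finset.univ).card + 1 := by
      rw [himage, Finset.card_insert_of_notMem hcmem]
    have hcomp : φ s = φ s' ∘ φ (eps a b) := by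
      rw [hdecomp]; exact hφ _ _
    by_cases hbij : Function.Bijective s'
    · set σ := Equiv.ofBijective s' hbij with hσ
      have hcoe : ⇑σ = s' := rfl
      rcases Int.units_eq_one_or (Equiv.Perm.sign σ) with hsgn | hsgn
      · have h2 : φ s' = φ id := by rw [← hcoe]; exact even_collapse hn hφ hni σ hsgn
        rw [hcomp, h2, f_comp hφ]
        exact atom_eq hn hφ hni a b _ _ hne h01
      · have h2 : φ s' = φ ⇑(Equiv.swap a b) := by
          rw [← hcoe]
          exact odd_collapse hn hφ hni σ (Equiv.swap a b) hsgn (Equiv.Perm.sign_swap hne)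
        rw [hcomp, h2, ← hφ, swap_comp_eps a b hne]
        exact atom_eq hn hφ hni b a _ _ hba h01
    · have h2 : φ s' = φ (eps ⟨0, by omega⟩ ⟨1, by omega⟩) :=
        ih s' (by omega) hbij
      rw [hcomp, h2, atom_eq hn hφ hni a b ⟨0, by omega⟩ ⟨1, by omega⟩ hne h01, ← hφ,
        eps_self]

theorem classify (hn : 5 ≤ n) (hφ : IsEndo φ) (hni : ¬ Function.Injective φ) :
    ∃ t e : Fin n → Fin n, Permissible t e ∧ φ = phi t e := by
  have h01 : (⟨0, by omega⟩ : Fin n) ≠ ⟨1, by omega⟩ := by simp [Fin.ext_iff]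
  set a₀ : Fin n := ⟨0, by omega⟩ with ha₀
  set a₁ : Fin n := ⟨1, by omega⟩ with ha₁
  set t := φ ⇑(Equiv.swap a₀ a₁) with ht
  set e := φ (eps a₀ a₁) with he
  have heven := even_collapse hn hφ hni
  have hoddc : ∀ σ : Perm (Fin n), Equiv.Perm.sign σ = -1 → φ ⇑σ = t :=
    fun σ h => odd_collapse hn hφ hni σ _ h (Equiv.Perm.sign_swap h01)
  have hsing := singular_collapse hn hφ hni
  have htt : t ∘ t = φ id := by
    rw [ht, ← hφ, coe_comp, Equiv.swap_mul_self]
    rfl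
  have hperm : Permissible t e := by
    refine ⟨?_, ?_, ?_, ?_⟩
    · show t ∘ (t ∘ t) = t
      rw [htt, comp_f hφ]
    · rw [ht, he, ← hφ, swap_comp_eps a₀ a₁ h01]
      exact atom_eq hn hφ hni a₁ a₀ a₀ a₁ (Ne.symm h01) h01
    · rw [ht, he, ← hφ, eps_comp_swap a₀ a₁ h01]
    · rw [he, ← hφ, eps_self]
  refine ⟨t, e, hperm, ?_⟩
  funext s
  rcases class_trichotomy s with h | ⟨h1, h⟩ | ⟨h1, h2, h⟩
  · obtain ⟨σ, hsgn, rfl⟩ := h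
    rw [phi_odd ⟨σ, hsgn, rfl⟩]
    exact hoddc σ hsgn
  · obtain ⟨σ, hsgn, rfl⟩ := h
    rw [phi_even ⟨σ, hsgn, rfl⟩, htt]
    exact heven σ hsgn
  · rw [phi_nonbij h]
    exact hsing s h

end T19

namespace T19
open Equiv Function

variable {n : ℕ}

lemma bij_idem_id {s : Fin n → Fin n} (h : s ∘ s = s) (hb : Function.Bijective s) :
    s = id := funext fun x => hb.injective (congrFun h x)

lemma idem_inj_eq_id {ζ : (Fin n → Fin n) → (Fin n → Fin n)}
    (hidem : (fun x => ζ (ζ x)) = ζ) (hinj : Function.Injective ζ) : ζ = id :=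
  funext fun x => hinj (congrFun hidem x)

lemma even_id : IsEvenPerm (id : Fin n → Fin n) := ⟨1, by simp, rfl⟩

lemma odd_swap {a b : Fin n} (hab : a ≠ b) : IsOddPerm ⇑(Equiv.swap a b) :=
  ⟨Equiv.swap a b, Equiv.Perm.sign_swap hab, rfl⟩

lemma cst_nonbij {x y : Fin n} (hxy : x ≠ y) (c : Fin n) :
    ¬ Function.Bijective (cst c) := fun h => hxy (h.injective (rfl : cst c x = cst c y))

lemma not_odd_id : ¬ IsOddPerm (id : Fin n → Fin n) :=
  fun h => not_odd_and_even h even_id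

/-- e is not bijective unless everything degenerates to the identity -/
lemma perm_e_bij {t e : Fin n → Fin n} (hp : Permissible t e)
    (hbe : Function.Bijective e) : t = id ∧ e = id := by
  have he : e = id := bij_idem_id hp.2.2.2 hbe
  subst he
  have := hp.2.1
  constructor
  · calc t = t ∘ id := rfl
      _ = id := this
  · rfl

lemma phi_val_t {t e : Fin n → Fin n} (hp : Permissible t e)
    (hcase : IsOddPerm t ∨ t = id ∨ t = e) : phi t e t = t := by
  rcases hcase with ht | ht | ht
  · exact phi_odd ht
  · subst ht; exact phi_even even_id
  · subst ht
    by_cases hb : Function.Bijective t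
    · obtain ⟨h1, h2⟩ := perm_e_bij hp hb
      rw [h1]
      exact phi_even even_id
    · exact phi_nonbij hb

lemma phi_val_tt {t e : Fin n → Fin n} (hp : Permissible t e)
    (hcase : IsOddPerm t ∨ t = id ∨ t = e) : phi t e (t ∘ t) = t ∘ t := by
  rcases hcase with ht | ht | ht
  · exact phi_even (odd_comp_odd ht ht)
  · subst ht; exact phi_even even_id
  · subst ht
    by_cases hb : Function.Bijective t
    · obtain ⟨h1, h2⟩ := perm_e_bij hp hb
      rw [h1]
      exact phi_even even_id
    · have hee : t ∘ t = t := hp.2.1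
      rw [hee]
      exact phi_nonbij hb

lemma phi_val_e {t e : Fin n → Fin n} (hp : Permissible t e)
    (hcase : IsOddPerm t ∨ t = id ∨ t = e) : phi t e e = e := by
  by_cases hb : Function.Bijective e
  · obtain ⟨h1, h2⟩ := perm_e_bij hp hb
    subst h1; rw [h2]
    exact phi_even even_id
  · exact phi_nonbij hb

lemma phi_idem {t e : Fin n → Fin n} (hp : Permissible t e)
    (hcase : IsOddPerm t ∨ t = id ∨ t = e) :
    (fun x => phi t e (phi t e x)) = phi t e := by
  funext x
  rcases class_trichotomy x with hx | ⟨-, hx⟩ | ⟨-, -, hx⟩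
  · rw [phi_odd hx]
    exact phi_val_t hp hcase
  · rw [phi_even hx]
    exact phi_val_tt hp hcase
  · rw [phi_nonbij hx]
    exact phi_val_e hp hcase

/-- kernel comparison, all three values distinct on both sides -/
lemma phi_ker_eq {t e t' e' : Fin n → Fin n}
    (h1 : t ≠ t ∘ t) (h2 : t ≠ e) (h3 : t ∘ t ≠ e)
    (h1' : t' ≠ t' ∘ t') (h2' : t' ≠ e') (h3' : t' ∘ t' ≠ e') (u v : Fin n → Fin n) :
    (phi t e u = phi t e v) ↔ (phi t' e' u = phi t' e' v) := by
  rcases class_trichotomy u with hu | ⟨hu1, hu⟩ | ⟨hu1, hu2, hu⟩ <;>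
    rcases class_trichotomy v with hv | ⟨hv1, hv⟩ | ⟨hv1, hv2, hv⟩
  · rw [phi_odd hu, phi_odd hv, phi_odd (t := t') hu, phi_odd (t := t') hv]
    exact iff_of_true rfl rfl
  · rw [phi_odd hu, phi_even hv, phi_odd (t := t') hu, phi_even (t := t') hv]
    exact iff_of_false h1 h1'
  · rw [phi_odd hu, phi_nonbij hv, phi_odd (t := t') hu, phi_nonbij (e := e') hv]
    exact iff_of_false h2 h2'
  · rw [phi_even hu, phi_odd hv, phi_even (t := t') hu, phi_odd (t := t') hv]
    exact iff_of_false (Ne.symm h1) (Ne.symm h1')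
  · rw [phi_even hu, phi_even hv, phi_even (t := t') hu, phi_even (t := t') hv]
    exact iff_of_true rfl rfl
  · rw [phi_even hu, phi_nonbij hv, phi_even (t := t') hu, phi_nonbij (e := e') hv]
    exact iff_of_false h3 h3'
  · rw [phi_nonbij hu, phi_odd hv, phi_nonbij (e := e') hu, phi_odd (t := t') hv]
    exact iff_of_false (Ne.symm h2) (Ne.symm h2')
  · rw [phi_nonbij hu, phi_even hv, phi_nonbij (e := e') hu, phi_even (t := t') hv]
    exact iff_of_false (Ne.symm h3) (Ne.symm h3')
  · rw [phi_nonbij hu, phi_nonbij hv, phi_nonbij (e := e') hu, phi_nonbij (e := e') hv]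
    exact iff_of_true rfl rfl

/-- kernel comparison, two-valued case on both sides -/
lemma phi_ker_eq2 {t e t' e' : Fin n → Fin n}
    (htt : t ∘ t = t) (h2 : t ≠ e) (htt' : t' ∘ t' = t') (h2' : t' ≠ e') (u v : Fin n → Fin n) :
    (phi t e u = phi t e v) ↔ (phi t' e' u = phi t' e' v) := by
  have h3 : t ∘ t ≠ e := by rw [htt]; exact h2
  have h3' : t' ∘ t' ≠ e' := by rw [htt']; exact h2'
  rcases class_trichotomy u with hu | ⟨hu1, hu⟩ | ⟨hu1, hu2, hu⟩ <;>
    rcases class_trichotomy v with hv | ⟨hv1, hv⟩ | ⟨hv1, hv2, hv⟩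
  · rw [phi_odd hu, phi_odd hv, phi_odd (t := t') hu, phi_odd (t := t') hv]
    exact iff_of_true rfl rfl
  · rw [phi_odd hu, phi_even hv, phi_odd (t := t') hu, phi_even (t := t') hv]
    exact iff_of_true htt.symm htt'.symm
  · rw [phi_odd hu, phi_nonbij hv, phi_odd (t := t') hu, phi_nonbij (e := e') hv]
    exact iff_of_false h2 h2'
  · rw [phi_even hu, phi_odd hv, phi_even (t := t') hu, phi_odd (t := t') hv]
    exact iff_of_true htt htt'
  · rw [phi_even hu, phi_even hv, phi_even (t := t') hu, phi_even (t := t') hv]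
    exact iff_of_true rfl rfl
  · rw [phi_even hu, phi_nonbij hv, phi_even (t := t') hu, phi_nonbij (e := e') hv]
    exact iff_of_false h3 h3'
  · rw [phi_nonbij hu, phi_odd hv, phi_nonbij (e := e') hu, phi_odd (t := t') hv]
    exact iff_of_false (Ne.symm h2) (Ne.symm h2')
  · rw [phi_nonbij hu, phi_even hv, phi_nonbij (e := e') hu, phi_even (t := t') hv]
    exact iff_of_false (Ne.symm h3) (Ne.symm h3')
  · rw [phi_nonbij hu, phi_nonbij hv, phi_nonbij (e := e') hu, phi_nonbij (e := e') hv]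
    exact iff_of_true rfl rfl

end T19

namespace T19
open Equiv Function

variable {n : ℕ}

lemma even_of_bij_not_odd {s : Fin n → Fin n} (hb : Function.Bijective s)
    (h : ¬ IsOddPerm s) : IsEvenPerm s := (odd_or_even_of_bijective hb).resolve_left h

theorem partA (hn : 5 ≤ n) :
    ∀ α : (Fin n → Fin n) → (Fin n → Fin n), IsEndo α →
      ∃ η, IsEndo η ∧ (fun x => η (η x)) = η ∧
        ∀ γ δ : (Fin n → Fin n) → (Fin n → Fin n), IsEndo γ → IsEndo δ →
          ((fun x => η (γ x)) = (fun x => η (δ x)) ↔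
            (fun x => α (γ x)) = (fun x => α (δ x))) := by
  intro α hα
  have h01 : (⟨0, by omega⟩ : Fin n) ≠ ⟨1, by omega⟩ := by simp [Fin.ext_iff]
  have h02 : (⟨0, by omega⟩ : Fin n) ≠ ⟨2, by omega⟩ := by simp [Fin.ext_iff]
  have h12 : (⟨1, by omega⟩ : Fin n) ≠ ⟨2, by omega⟩ := by simp [Fin.ext_iff]
  set a₀ : Fin n := ⟨0, by omega⟩
  set a₁ : Fin n := ⟨1, by omega⟩
  set a₂ : Fin n := ⟨2, by omega⟩
  by_cases hinj : Function.Injective α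
  · refine ⟨id, endo_id, rfl, fun γ δ _ _ => ?_⟩
    constructor
    · intro h
      have h' : γ = δ := h
      rw [h']
    · intro h
      have h' : ∀ x, γ x = δ x := fun x => hinj (congrFun h x)
      exact funext fun x => h' x
  · obtain ⟨t, e, hp, hαeq⟩ := classify hn hα hinj
    subst hαeq
    by_cases hcase : IsOddPerm t ∨ t = id ∨ t = e
    · exact ⟨phi t e, endo_phi hp, phi_idem hp hcase, fun γ δ _ _ => Iff.rfl⟩
    · push_neg at hcase
      obtain ⟨hnot, hnid, hne⟩ := hcase
      have hidc : (id : Fin n → Fin n) ≠ cst a₂ := fun h => h02 (congrFun h a₀)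
      by_cases htt : t ∘ t = t
      · have hpid : Permissible (id : Fin n → Fin n) (cst a₂) := ⟨rfl, rfl, rfl, rfl⟩
        refine ⟨phi id (cst a₂), endo_phi hpid, phi_idem hpid (Or.inr (Or.inl rfl)),
          fun γ δ _ _ => ?_⟩
        rw [funext_iff, funext_iff]
        exact forall_congr' fun x => phi_ker_eq2 rfl hidc htt hne (γ x) (δ x)
      · -- three distinct values
        set s01 : Fin n → Fin n := ⇑(Equiv.swap a₀ a₁) with hs01def
        have hsq : s01 ∘ s01 = id := by
          funext z; exact Equiv.swap_apply_self a₀ a₁ z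
        have hs01a0 : s01 a₀ = a₁ := Equiv.swap_apply_left a₀ a₁
        have hps : Permissible s01 (cst a₂) := by
          refine ⟨?_, ?_, rfl, rfl⟩
          · rw [hsq]
            rfl
          · funext z
            show s01 a₂ = a₂
            exact Equiv.swap_apply_of_ne_of_ne (Ne.symm h02) (Ne.symm h12)
        have hd1 : s01 ≠ s01 ∘ s01 := by
          rw [hsq]
          intro h
          exact h01 (by simpa [hs01a0] using (congrFun h a₀).symm)
        have hd2 : s01 ≠ cst a₂ := by
          intro h
          have := congrFun h a₀
          rw [hs01a0] at this
          exact h12 this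
        have hd3 : s01 ∘ s01 ≠ cst a₂ := by rw [hsq]; exact hidc
        have h1 : t ≠ t ∘ t := fun h => htt h.symm
        have h3 : t ∘ t ≠ e := by
          intro h
          have h4 := hp.1
          rw [h, hp.2.1] at h4
          exact hne h4.symm
        refine ⟨phi s01 (cst a₂), endo_phi hps, phi_idem hps (Or.inl (odd_swap h01)),
          fun γ δ _ _ => ?_⟩
        rw [funext_iff, funext_iff]
        exact forall_congr' fun x => phi_ker_eq hd1 hd2 hd3 h1 hne h3 (γ x) (δ x)

theorem partB (hn : 5 ≤ n) :
    ∀ α : (Fin n → Fin n) → (Fin n → Fin n), IsEndo α →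
      ∃ η, IsEndo η ∧ (fun x => η (η x)) = η ∧
        ∀ ζ : (Fin n → Fin n) → (Fin n → Fin n), IsEndo ζ → (fun x => ζ (ζ x)) = ζ →
          ((fun x => ζ (η x)) = η ↔ (fun x => ζ (α x)) = α) := by
  intro α hα
  have h01 : (⟨0, by omega⟩ : Fin n) ≠ ⟨1, by omega⟩ := by simp [Fin.ext_iff]
  set a₀ : Fin n := ⟨0, by omega⟩
  set a₁ : Fin n := ⟨1, by omega⟩
  by_cases hinj : Function.Injective α
  · refine ⟨id, endo_id, rfl, fun ζ hζ hζi => ?_⟩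
    have hsurj : Function.Surjective α := Finite.injective_iff_surjective.mp hinj
    constructor
    · intro h
      have hζid : ζ = id := h
      rw [hζid]
      rfl
    · intro h
      have hfix : ∀ y, ζ y = y := by
        intro y
        obtain ⟨x, rfl⟩ := hsurj y
        exact congrFun h x
      exact funext fun x => hfix (id x)
  · obtain ⟨t, e, hp, hαeq⟩ := classify hn hα hinj
    subst hαeq
    by_cases hcase : IsOddPerm t ∨ t = id ∨ t = e
    · exact ⟨phi t e, endo_phi hp, phi_idem hp hcase, fun ζ _ _ => Iff.rfl⟩
    · push_neg at hcase
      obtain ⟨hnot, hnid, hne⟩ := hcase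
      refine ⟨id, endo_id, rfl, fun ζ hζ hζi => ?_⟩
      constructor
      · intro h
        have hζid : ζ = id := h
        rw [hζid]
        rfl
      · intro h
        by_cases hζinj : Function.Injective ζ
        · have hzid := idem_inj_eq_id hζi hζinj
          rw [hzid]
          rfl
        · exfalso
          obtain ⟨a, b, hpab, hζeq⟩ := classify hn hζ hζinj
          subst hζeq
          have hvt : phi a b t = t := by
            have h2 := congrFun h ⇑(Equiv.swap a₀ a₁)
            rwa [phi_odd (odd_swap h01)] at h2
          have hvtt : phi a b (t ∘ t) = t ∘ t := by
            have h2 := congrFun h (id : Fin n → Fin n)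
            rwa [phi_even even_id] at h2
          have hve : phi a b e = e := by
            have h2 := congrFun h (cst a₀)
            rwa [phi_nonbij (cst_nonbij h01 a₀)] at h2
          by_cases hbt : Function.Bijective t
          · have hevt : IsEvenPerm t := even_of_bij_not_odd hbt hnot
            rw [phi_even hevt] at hvt
            rw [phi_even (even_comp_even hevt hevt)] at hvtt
            have : t ∘ t = t := by rw [← hvtt, hvt]
            exact hnid (bij_idem_id this hbt)
          · rw [phi_nonbij hbt] at hvt
            have hbe : ¬ Function.Bijective e := by
              intro hbe
              exact hnid (perm_e_bij hp hbe).1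
            rw [phi_nonbij hbe] at hve
            exact hne (hvt.symm.trans hve)

end T19

namespace T19
open Equiv Function

variable {n : ℕ}

lemma comm_of_conj {σ : Perm (Fin n)} {b : Fin n → Fin n}
    (h : ⇑σ ∘ b ∘ ⇑σ⁻¹ = b) : ∀ z, σ (b z) = b (σ z) := by
  intro z
  have h2 := congrFun h (σ z)
  simpa using h2

lemma conj_of_comm {σ : Perm (Fin n)} {b : Fin n → Fin n}
    (h : ∀ z, σ (b z) = b (σ z)) : ⇑σ ∘ b ∘ ⇑σ⁻¹ = b := by
  funext z
  have h2 := h (σ⁻¹ z)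
  simpa using h2

lemma fix_swap {x y w : Fin n} (hxy : x ≠ y) (h : Equiv.swap x y w = w) :
    w ≠ x ∧ w ≠ y := by
  constructor
  · rintro rfl
    rw [Equiv.swap_apply_left] at h
    exact hxy h.symm
  · rintro rfl
    rw [Equiv.swap_apply_right] at h
    exact hxy h

lemma ccore (a0 a1 a2 a3 a4 : Fin n)
    (h01 : a0 ≠ a1) (h02 : a0 ≠ a2) (h03 : a0 ≠ a3) (h04 : a0 ≠ a4)
    (h12 : a1 ≠ a2) (h13 : a1 ≠ a3) (h14 : a1 ≠ a4)
    (h23 : a2 ≠ a3) (h24 : a2 ≠ a4) (h34 : a3 ≠ a4)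
    (b : Fin n → Fin n) (hb : b ∘ b = b)
    (H : ∀ σ : Perm (Fin n), (⇑σ ∘ b ∘ ⇑σ⁻¹ = b) ↔
        (σ * (Equiv.swap a0 a1 * Equiv.swap a2 a3)
          = (Equiv.swap a0 a1 * Equiv.swap a2 a3) * σ ∧ σ a4 = a4)) :
    False := by
  set τ₀ : Perm (Fin n) := Equiv.swap a0 a1 * Equiv.swap a2 a3 with hτ₀
  have vτ0 : τ₀ a0 = a1 := by
    rw [hτ₀, Equiv.Perm.mul_apply, Equiv.swap_apply_of_ne_of_ne h02 h03,
      Equiv.swap_apply_left]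
  have vτ1 : τ₀ a1 = a0 := by
    rw [hτ₀, Equiv.Perm.mul_apply, Equiv.swap_apply_of_ne_of_ne h12 h13,
      Equiv.swap_apply_right]
  have vτ2 : τ₀ a2 = a3 := by
    rw [hτ₀, Equiv.Perm.mul_apply, Equiv.swap_apply_left,
      Equiv.swap_apply_of_ne_of_ne (Ne.symm h03) (Ne.symm h13)]
  have vτ3 : τ₀ a3 = a2 := by
    rw [hτ₀, Equiv.Perm.mul_apply, Equiv.swap_apply_right,
      Equiv.swap_apply_of_ne_of_ne (Ne.symm h02) (Ne.symm h12)]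
  have vτz : ∀ z, z ≠ a0 → z ≠ a1 → z ≠ a2 → z ≠ a3 → τ₀ z = z := by
    intro z hz0 hz1 hz2 hz3
    rw [hτ₀, Equiv.Perm.mul_apply, Equiv.swap_apply_of_ne_of_ne hz2 hz3,
      Equiv.swap_apply_of_ne_of_ne hz0 hz1]
  have hcomm2301 : Equiv.swap a2 a3 * Equiv.swap a0 a1
      = Equiv.swap a0 a1 * Equiv.swap a2 a3 :=
    swap_disjoint_commute h02 h03 h12 h13
  have c01 : Equiv.swap a0 a1 * τ₀ = τ₀ * Equiv.swap a0 a1 := by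
    have r1 : Equiv.swap a0 a1 * τ₀ = Equiv.swap a2 a3 := by
      rw [hτ₀, ← mul_assoc, Equiv.swap_mul_self, one_mul]
    have r2 : τ₀ * Equiv.swap a0 a1 = Equiv.swap a2 a3 := by
      rw [hτ₀, mul_assoc, hcomm2301, ← mul_assoc, Equiv.swap_mul_self, one_mul]
    rw [r1, r2]
  have c23 : Equiv.swap a2 a3 * τ₀ = τ₀ * Equiv.swap a2 a3 := by
    have r1 : Equiv.swap a2 a3 * τ₀ = Equiv.swap a0 a1 := by
      rw [hτ₀, ← mul_assoc, hcomm2301, mul_assoc, Equiv.swap_mul_self, mul_one]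
    have r2 : τ₀ * Equiv.swap a2 a3 = Equiv.swap a0 a1 := by
      rw [hτ₀, mul_assoc, Equiv.swap_mul_self, mul_one]
    rw [r1, r2]
  -- the permutation π = (a0 a2)(a1 a3)
  set π : Perm (Fin n) := Equiv.swap a0 a2 * Equiv.swap a1 a3 with hπ
  have vπ0 : π a0 = a2 := by
    rw [hπ, Equiv.Perm.mul_apply, Equiv.swap_apply_of_ne_of_ne h01 h03,
      Equiv.swap_apply_left]
  have vπ1 : π a1 = a3 := by
    rw [hπ, Equiv.Perm.mul_apply, Equiv.swap_apply_left,
      Equiv.swap_apply_of_ne_of_ne (Ne.symm h03) (Ne.symm h23)]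
  have vπ2 : π a2 = a0 := by
    rw [hπ, Equiv.Perm.mul_apply, Equiv.swap_apply_of_ne_of_ne (Ne.symm h12) h23,
      Equiv.swap_apply_right]
  have vπ3 : π a3 = a1 := by
    rw [hπ, Equiv.Perm.mul_apply, Equiv.swap_apply_right,
      Equiv.swap_apply_of_ne_of_ne (Ne.symm h01) h12]
  have vπz : ∀ z, z ≠ a0 → z ≠ a1 → z ≠ a2 → z ≠ a3 → π z = z := by
    intro z hz0 hz1 hz2 hz3
    rw [hπ, Equiv.Perm.mul_apply, Equiv.swap_apply_of_ne_of_ne hz1 hz3,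
      Equiv.swap_apply_of_ne_of_ne hz0 hz2]
  have cπ : π * τ₀ = τ₀ * π := by
    apply Equiv.ext
    intro z
    show π (τ₀ z) = τ₀ (π z)
    by_cases hz0 : z = a0
    · rw [hz0, vτ0, vπ1, vπ0, vτ2]
    by_cases hz1 : z = a1
    · rw [hz1, vτ1, vπ0, vπ1, vτ3]
    by_cases hz2 : z = a2
    · rw [hz2, vτ2, vπ3, vπ2, vτ0]
    by_cases hz3 : z = a3
    · rw [hz3, vτ3, vπ2, vπ3, vτ1]
    · rw [vτz z hz0 hz1 hz2 hz3, vπz z hz0 hz1 hz2 hz3, vτz z hz0 hz1 hz2 hz3]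
  -- commutation of b with the three elements of C
  have hcm1 : ∀ z, Equiv.swap a0 a1 (b z) = b (Equiv.swap a0 a1 z) :=
    comm_of_conj ((H _).mpr ⟨c01, Equiv.swap_apply_of_ne_of_ne (Ne.symm h04) (Ne.symm h14)⟩)
  have hcm2 : ∀ z, Equiv.swap a2 a3 (b z) = b (Equiv.swap a2 a3 z) :=
    comm_of_conj ((H _).mpr ⟨c23, Equiv.swap_apply_of_ne_of_ne (Ne.symm h24) (Ne.symm h34)⟩)
  have hcm3 : ∀ z, π (b z) = b (π z) := by
    refine comm_of_conj ((H _).mpr ⟨cπ, ?_⟩)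
    exact vπz a4 (Ne.symm h04) (Ne.symm h14) (Ne.symm h24) (Ne.symm h34)
  have hidem : ∀ z, b (b z) = b z := fun z => congrFun hb z
  -- step 1 : points away from the four points have images away from them
  have step1 : ∀ z, z ≠ a0 → z ≠ a1 → z ≠ a2 → z ≠ a3 →
      (b z ≠ a0 ∧ b z ≠ a1 ∧ b z ≠ a2 ∧ b z ≠ a3) := by
    intro z hz0 hz1 hz2 hz3
    have e1 : Equiv.swap a0 a1 (b z) = b z := by
      rw [hcm1 z, Equiv.swap_apply_of_ne_of_ne hz0 hz1]
    have e2 : Equiv.swap a2 a3 (b z) = b z := by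
      rw [hcm2 z, Equiv.swap_apply_of_ne_of_ne hz2 hz3]
    obtain ⟨f1, f2⟩ := fix_swap h01 e1
    obtain ⟨f3, f4⟩ := fix_swap h23 e2
    exact ⟨f1, f2, f3, f4⟩
  -- b a0 avoids a2, a3
  have hb023 : b a0 ≠ a2 ∧ b a0 ≠ a3 := by
    apply fix_swap h23
    rw [hcm2 a0, Equiv.swap_apply_of_ne_of_ne h02 h03]
  -- the final contradiction, given that swap a0 a2 commutes with b
  have final : (∀ z, Equiv.swap a0 a2 (b z) = b (Equiv.swap a0 a2 z)) → False := by
    intro hcomm02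
    obtain ⟨hct, -⟩ := (H (Equiv.swap a0 a2)).mp (conj_of_comm hcomm02)
    have := congrArg (fun σ : Perm (Fin n) => σ a0) hct
    simp only [Equiv.Perm.mul_apply] at this
    rw [vτ0, Equiv.swap_apply_of_ne_of_ne (Ne.symm h01) h12,
      Equiv.swap_apply_left, vτ2] at this
    exact h13 this
  -- case analysis on b a0
  by_cases hb00 : b a0 = a0
  · have vb1 : b a1 = a1 := by
      have h5 := hcm1 a1
      rw [Equiv.swap_apply_right, hb00] at h5
      have h6 := congrArg (Equiv.swap a0 a1) h5
      rw [Equiv.swap_apply_self, Equiv.swap_apply_left] at h6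
      exact h6
    have vb2 : b a2 = a2 := by
      have h5 := hcm3 a0
      rw [hb00, vπ0] at h5
      exact h5.symm
    have vb3 : b a3 = a3 := by
      have h5 := hcm3 a1
      rw [vb1, vπ1] at h5
      exact h5.symm
    apply final
    intro z
    by_cases hz0 : z = a0
    · rw [hz0, hb00, Equiv.swap_apply_left, vb2]
    by_cases hz2 : z = a2
    · rw [hz2, vb2, Equiv.swap_apply_right, hb00]
    by_cases hz1 : z = a1
    · rw [hz1, vb1, Equiv.swap_apply_of_ne_of_ne (Ne.symm h01) h12, vb1]
    by_cases hz3 : z = a3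
    · rw [hz3, vb3, Equiv.swap_apply_of_ne_of_ne (Ne.symm h03) (Ne.symm h23), vb3]
    · obtain ⟨f1, -, f3, -⟩ := step1 z hz0 hz1 hz2 hz3
      rw [Equiv.swap_apply_of_ne_of_ne f1 f3, Equiv.swap_apply_of_ne_of_ne hz0 hz2]
  by_cases hb01 : b a0 = a1
  · exfalso
    have h5 := hidem a0
    rw [hb01] at h5
    have h6 := hcm1 a1
    rw [h5, Equiv.swap_apply_right, hb01] at h6
    exact h01 h6
  · -- b a0 is away from all four points
    have hb0 : b a0 ≠ a0 ∧ b a0 ≠ a1 ∧ b a0 ≠ a2 ∧ b a0 ≠ a3 :=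
      ⟨hb00, hb01, hb023.1, hb023.2⟩
    have vb1 : b a1 = b a0 := by
      have h5 := hcm1 a1
      rw [Equiv.swap_apply_right] at h5
      have h6 := congrArg (Equiv.swap a0 a1) h5
      rw [Equiv.swap_apply_self, Equiv.swap_apply_of_ne_of_ne hb0.1 hb0.2.1] at h6
      exact h6
    have vb2 : b a2 = b a0 := by
      have h5 := hcm3 a0
      rw [vπ0, vπz (b a0) hb0.1 hb0.2.1 hb0.2.2.1 hb0.2.2.2] at h5
      exact h5.symm
    have vb3 : b a3 = b a0 := by
      have h5 := hcm3 a1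
      rw [vπ1, vb1, vπz (b a0) hb0.1 hb0.2.1 hb0.2.2.1 hb0.2.2.2] at h5
      exact h5.symm
    apply final
    intro z
    have hfix : Equiv.swap a0 a2 (b a0) = b a0 :=
      Equiv.swap_apply_of_ne_of_ne hb0.1 hb0.2.2.1
    by_cases hz0 : z = a0
    · rw [hz0, hfix, Equiv.swap_apply_left, vb2]
    by_cases hz2 : z = a2
    · rw [hz2, vb2, hfix, Equiv.swap_apply_right]
    by_cases hz1 : z = a1
    · rw [hz1, vb1, hfix, Equiv.swap_apply_of_ne_of_ne (Ne.symm h01) h12, vb1]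
    by_cases hz3 : z = a3
    · rw [hz3, vb3, hfix, Equiv.swap_apply_of_ne_of_ne (Ne.symm h03) (Ne.symm h23), vb3]
    · obtain ⟨f1, -, f3, -⟩ := step1 z hz0 hz1 hz2 hz3
      rw [Equiv.swap_apply_of_ne_of_ne f1 f3, Equiv.swap_apply_of_ne_of_ne hz0 hz2]

end T19

namespace T19
open Equiv Function

variable {n : ℕ}

theorem partC_aux (hn : 5 ≤ n) (a0 a1 a2 a3 a4 : Fin n)
    (h01 : a0 ≠ a1) (h02 : a0 ≠ a2) (h03 : a0 ≠ a3) (h04 : a0 ≠ a4)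
    (h12 : a1 ≠ a2) (h13 : a1 ≠ a3) (h14 : a1 ≠ a4)
    (h23 : a2 ≠ a3) (h24 : a2 ≠ a4) (h34 : a3 ≠ a4) :
    ∃ α : (Fin n → Fin n) → (Fin n → Fin n), IsEndo α ∧
      ∀ η : (Fin n → Fin n) → (Fin n → Fin n), IsEndo η → (fun x => η (η x)) = η →
        ¬ (∀ γ δ : (Fin n → Fin n) → (Fin n → Fin n), IsEndo γ → IsEndo δ →
          ((fun x => γ (η x)) = (fun x => δ (η x)) ↔
            (fun x => γ (α x)) = (fun x => δ (α x)))) := by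
  set τ₀ : Perm (Fin n) := Equiv.swap a0 a1 * Equiv.swap a2 a3 with hτ₀
  set t₀ : Fin n → Fin n := ⇑τ₀ with ht₀
  set e₀ : Fin n → Fin n := cst a4 with he₀
  have hcomm2301 : Equiv.swap a2 a3 * Equiv.swap a0 a1
      = Equiv.swap a0 a1 * Equiv.swap a2 a3 :=
    swap_disjoint_commute h02 h03 h12 h13
  have hsign : Equiv.Perm.sign τ₀ = 1 := by
    rw [hτ₀, map_mul, Equiv.Perm.sign_swap h01, Equiv.Perm.sign_swap h23]
    decide
  have heve : IsEvenPerm t₀ := ⟨τ₀, hsign, rfl⟩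
  have hτsq : τ₀ * τ₀ = 1 := by
    rw [hτ₀]
    calc Equiv.swap a0 a1 * Equiv.swap a2 a3 * (Equiv.swap a0 a1 * Equiv.swap a2 a3)
        = Equiv.swap a0 a1 * (Equiv.swap a2 a3 * Equiv.swap a0 a1 * Equiv.swap a2 a3) := by
          rw [mul_assoc, mul_assoc]
      _ = Equiv.swap a0 a1 * (Equiv.swap a0 a1 * Equiv.swap a2 a3 * Equiv.swap a2 a3) := by
          rw [hcomm2301]
      _ = Equiv.swap a0 a1 * (Equiv.swap a0 a1 * (Equiv.swap a2 a3 * Equiv.swap a2 a3)) := by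
          rw [mul_assoc]
      _ = 1 := by rw [Equiv.swap_mul_self, mul_one, Equiv.swap_mul_self]
  have htsq : t₀ ∘ t₀ = id := by
    rw [ht₀, coe_comp, hτsq]
    rfl
  have vτ0 : τ₀ a0 = a1 := by
    rw [hτ₀, Equiv.Perm.mul_apply, Equiv.swap_apply_of_ne_of_ne h02 h03,
      Equiv.swap_apply_left]
  have vτ2 : τ₀ a2 = a3 := by
    rw [hτ₀, Equiv.Perm.mul_apply, Equiv.swap_apply_left,
      Equiv.swap_apply_of_ne_of_ne (Ne.symm h03) (Ne.symm h13)]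
  have vτ4 : τ₀ a4 = a4 := by
    rw [hτ₀, Equiv.Perm.mul_apply, Equiv.swap_apply_of_ne_of_ne (Ne.symm h24) (Ne.symm h34),
      Equiv.swap_apply_of_ne_of_ne (Ne.symm h04) (Ne.symm h14)]
  have hperm : Permissible t₀ e₀ := by
    refine ⟨?_, ?_, rfl, rfl⟩
    · show t₀ ∘ (t₀ ∘ t₀) = t₀
      rw [htsq]
      exact Function.comp_id t₀
    · funext z
      show t₀ a4 = a4
      exact vτ4
  have hαe : IsEndo (phi t₀ e₀) := endo_phi hperm
  have he₀nb : ¬ Function.Bijective e₀ := cst_nonbij h01 a4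
  have hταne : t₀ ≠ id := by
    intro h
    have h5 := congrFun h a0
    rw [show t₀ a0 = a1 from vτ0] at h5
    exact h01 h5.symm
  have c01 : Equiv.swap a0 a1 * τ₀ = τ₀ * Equiv.swap a0 a1 := by
    have r1 : Equiv.swap a0 a1 * τ₀ = Equiv.swap a2 a3 := by
      rw [hτ₀, ← mul_assoc, Equiv.swap_mul_self, one_mul]
    have r2 : τ₀ * Equiv.swap a0 a1 = Equiv.swap a2 a3 := by
      rw [hτ₀, mul_assoc, hcomm2301, ← mul_assoc, Equiv.swap_mul_self, one_mul]
    rw [r1, r2]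
  -- characterization of the right-hand condition via conjugation endomorphisms
  have HRα : ∀ σ : Perm (Fin n),
      ((fun x => id (phi t₀ e₀ x)) = (fun x => conjEndo σ (phi t₀ e₀ x))) ↔
        (σ * τ₀ = τ₀ * σ ∧ σ a4 = a4) := by
    intro σ
    constructor
    · intro h
      constructor
      · have h1 := congrFun h ⇑(Equiv.swap a0 a1)
        rw [phi_odd (odd_swap h01)] at h1
        have comm := comm_of_conj ((h1.symm : ⇑σ ∘ t₀ ∘ ⇑σ⁻¹ = t₀))
        apply Equiv.ext
        intro z
        exact comm z
      · have h2 := congrFun h e₀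
        rw [phi_nonbij he₀nb] at h2
        have h3 := congrFun h2 a4
        exact (h3 : a4 = σ (e₀ (σ⁻¹ a4))).symm
    · rintro ⟨hcom, hfix⟩
      funext x
      show phi t₀ e₀ x = conjEndo σ (phi t₀ e₀ x)
      rcases class_trichotomy x with hx | ⟨-, hx⟩ | ⟨-, -, hx⟩
      · rw [phi_odd hx]
        have comm : ∀ z, σ (t₀ z) = t₀ (σ z) := by
          intro z
          have := congrArg (fun p : Perm (Fin n) => p z) hcom
          simpa [Equiv.Perm.mul_apply] using this
        exact (conj_of_comm comm).symm
      · rw [phi_even hx, htsq]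
        funext z
        simp [conjEndo]
      · rw [phi_nonbij hx]
        funext z
        show e₀ z = σ (e₀ (σ⁻¹ z))
        rw [show ∀ w, e₀ w = a4 from fun _ => rfl, show ∀ w, e₀ w = a4 from fun _ => rfl,
          hfix]
  refine ⟨phi t₀ e₀, hαe, ?_⟩
  intro η hη hηi Hiff
  by_cases hinj : Function.Injective η
  · have hid := idem_inj_eq_id hηi hinj
    subst hid
    have hiff := Hiff id (conjEndo (Equiv.swap a0 a1)) endo_id (endo_conj _)
    have hRHS := (HRα (Equiv.swap a0 a1)).mpr
      ⟨c01, Equiv.swap_apply_of_ne_of_ne (Ne.symm h04) (Ne.symm h14)⟩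
    have hLHS := hiff.mpr hRHS
    have h9 := congrFun (congrFun hLHS ⇑(Equiv.swap a0 a2)) a0
    simp only [id_eq, conjEndo, Function.comp_apply, Equiv.swap_inv] at h9
    rw [Equiv.swap_apply_left, Equiv.swap_apply_left,
      Equiv.swap_apply_of_ne_of_ne (Ne.symm h01) h12, Equiv.swap_apply_right] at h9
    exact h02 h9.symm
  · obtain ⟨a, b, hpab, hmm⟩ := classify hn hη hinj
    subst hmm
    have hb2 : b ∘ b = b := hpab.2.2.2
    have hfa : phi a b a = a := by
      have h5 := congrFun hηi ⇑(Equiv.swap a0 a1)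
      rwa [phi_odd (odd_swap h01)] at h5
    rcases class_trichotomy a with ha | ⟨ha1, ha⟩ | ⟨ha1, ha2', ha⟩
    · -- a is an odd permutation
      have hpid : Permissible (id : Fin n → Fin n) e₀ := ⟨rfl, rfl, rfl, rfl⟩
      have hiff := Hiff (phi t₀ e₀) (phi id e₀) hαe (endo_phi hpid)
      have hRHS : (fun x => phi t₀ e₀ (phi t₀ e₀ x)) = fun x => phi id e₀ (phi t₀ e₀ x) := by
        funext x
        rcases class_trichotomy x with hx | ⟨-, hx⟩ | ⟨-, -, hx⟩
        · rw [phi_odd hx, phi_even heve, phi_even (t := id) heve, htsq]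
          rfl
        · rw [phi_even hx, htsq, phi_even even_id, phi_even (t := id) even_id, htsq]
          rfl
        · rw [phi_nonbij hx, phi_nonbij he₀nb, phi_nonbij (t := id) he₀nb]
      have hLHS := hiff.mpr hRHS
      have h9 := congrFun hLHS ⇑(Equiv.swap a0 a1)
      rw [phi_odd (odd_swap h01), phi_odd ha, phi_odd (t := id) ha] at h9
      exact hταne h9
    · -- a is an even permutation, hence a = id
      rw [phi_even ha] at hfa
      have haid : a = id := bij_idem_id hfa (even_bij ha)
      subst haid
      have H' : ∀ σ : Perm (Fin n), (⇑σ ∘ b ∘ ⇑σ⁻¹ = b) ↔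
          (σ * τ₀ = τ₀ * σ ∧ σ a4 = a4) := by
        intro σ
        have hiff := Hiff id (conjEndo σ) endo_id (endo_conj σ)
        constructor
        · intro hconj
          apply (HRα σ).mp
          apply hiff.mp
          funext x
          show phi id b x = conjEndo σ (phi id b x)
          rcases class_trichotomy x with hx | ⟨-, hx⟩ | ⟨-, -, hx⟩
          · rw [phi_odd hx]
            funext z
            simp [conjEndo]
          · rw [phi_even hx]
            funext z
            simp [conjEndo]
          · rw [phi_nonbij hx]
            exact hconj.symm
        · intro hC
          have hlhs := hiff.mpr ((HRα σ).mpr hC)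
          have h9 := congrFun hlhs e₀
          rw [phi_nonbij (t := id) he₀nb] at h9
          exact h9.symm
      exact ccore a0 a1 a2 a3 a4 h01 h02 h03 h04 h12 h13 h14 h23 h24 h34 b hb2 H'
    · -- a is not bijective, hence b = a
      rw [phi_nonbij ha] at hfa
      subst hfa
      have haa : b ∘ b = b := hpab.2.2.2
      have H' : ∀ σ : Perm (Fin n), (⇑σ ∘ b ∘ ⇑σ⁻¹ = b) ↔
          (σ * τ₀ = τ₀ * σ ∧ σ a4 = a4) := by
        intro σ
        have hiff := Hiff id (conjEndo σ) endo_id (endo_conj σ)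
        constructor
        · intro hconj
          apply (HRα σ).mp
          apply hiff.mp
          funext x
          show phi b b x = conjEndo σ (phi b b x)
          rcases class_trichotomy x with hx | ⟨-, hx⟩ | ⟨-, -, hx⟩
          · rw [phi_odd hx]
            exact hconj.symm
          · rw [phi_even hx, haa]
            exact hconj.symm
          · rw [phi_nonbij hx]
            exact hconj.symm
        · intro hC
          have hlhs := hiff.mpr ((HRα σ).mpr hC)
          have h9 := congrFun hlhs e₀
          rw [phi_nonbij (t := b) he₀nb] at h9
          exact h9.symm
      exact ccore a0 a1 a2 a3 a4 h01 h02 h03 h04 h12 h13 h14 h23 h24 h34 b haa H'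

theorem partC (hn : 5 ≤ n) :
    ∃ α : (Fin n → Fin n) → (Fin n → Fin n), IsEndo α ∧
      ∀ η : (Fin n → Fin n) → (Fin n → Fin n), IsEndo η → (fun x => η (η x)) = η →
        ¬ (∀ γ δ : (Fin n → Fin n) → (Fin n → Fin n), IsEndo γ → IsEndo δ →
          ((fun x => γ (η x)) = (fun x => δ (η x)) ↔
            (fun x => γ (α x)) = (fun x => δ (α x)))) :=
  partC_aux hn ⟨0, by omega⟩ ⟨1, by omega⟩ ⟨2, by omega⟩ ⟨3, by omega⟩ ⟨4, by omega⟩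
    (by simp [Fin.ext_iff]) (by simp [Fin.ext_iff]) (by simp [Fin.ext_iff])
    (by simp [Fin.ext_iff]) (by simp [Fin.ext_iff]) (by simp [Fin.ext_iff])
    (by simp [Fin.ext_iff]) (by simp [Fin.ext_iff]) (by simp [Fin.ext_iff])
    (by simp [Fin.ext_iff])

end T19

/-- For `n ≥ 5`, the endomorphism monoid of `T_n` is (a) left abundant,
(b) right Fountain, but (c) not right abundant. -/
theorem abundance_properties (n : ℕ) (hn : 5 ≤ n) :
    (∀ α : (Fin n → Fin n) → (Fin n → Fin n), IsEndo α →
      ∃ η, IsEndo η ∧ (fun x => η (η x)) = η ∧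
        ∀ γ δ : (Fin n → Fin n) → (Fin n → Fin n), IsEndo γ → IsEndo δ →
          ((fun x => η (γ x)) = (fun x => η (δ x)) ↔
            (fun x => α (γ x)) = (fun x => α (δ x)))) ∧
      (∀ α : (Fin n → Fin n) → (Fin n → Fin n), IsEndo α →
        ∃ η, IsEndo η ∧ (fun x => η (η x)) = η ∧
          ∀ ζ : (Fin n → Fin n) → (Fin n → Fin n), IsEndo ζ → (fun x => ζ (ζ x)) = ζ →
            ((fun x => ζ (η x)) = η ↔ (fun x => ζ (α x)) = α)) ∧
      (∃ α : (Fin n → Fin n) → (Fin n → Fin n), IsEndo α ∧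
        ∀ η : (Fin n → Fin n) → (Fin n → Fin n), IsEndo η → (fun x => η (η x)) = η →
          ¬ (∀ γ δ : (Fin n → Fin n) → (Fin n → Fin n), IsEndo γ → IsEndo δ →
            ((fun x => γ (η x)) = (fun x => δ (η x)) ↔
              (fun x => γ (α x)) = (fun x => δ (α x))))) := by
  exact ⟨T19.partA hn, T19.partB hn, T19.partC hn⟩
end
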